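/- arXiv:1103.2692 — 5 statements merged into one kernel-verified Lean document; each statement's English description precedes it below -/
import Mathlib

section
/- For any q ≥ 0, t ≥ -2q, u > 0, v ≥ 0 with (t+2q)/u < v, and any fixed sequence ξ with Σ_i ξ_i² i^{2q} < ∞, one has N^{(t+2q)/u} · Σ_{i=1}^∞ ξ_i² i^{-t}/(1+N i^{-u})^v → 0 as N → ∞. -/
open Filter Topology Real

lemma aux_tendsto (α v c d : ℝ) (hα : 0 ≤ α) (hαv : α < v) (hd : 0 < d) (hc : 0 ≤ c) :
    Tendsto (fun N : ℝ => N ^ α * c / (1 + N * d) ^ v) atTop (nhds 0) := by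
  have hupper : Tendsto (fun N : ℝ => c / d ^ v * N ^ (α - v)) atTop (nhds 0) := by
    have := tendsto_rpow_neg_atTop (y := v - α) (by linarith)
    have h2 := this.const_mul (c / d ^ v)
    simpa [neg_sub] using h2
  apply squeeze_zero' (g := fun N => c / d ^ v * N ^ (α - v)) ?_ ?_ hupper
  · filter_upwards [eventually_gt_atTop 0] with N hN
    positivity
  · filter_upwards [eventually_gt_atTop 0] with N hN
    have h1 : (N * d) ^ v ≤ (1 + N * d) ^ v :=
      Real.rpow_le_rpow (by positivity) (by linarith) (by linarith [hα, hαv])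
    have hNd : (0:ℝ) < N * d := by positivity
    have h2 : (0:ℝ) < (1 + N * d) ^ v := by positivity
    rw [div_le_iff₀ h2]
    have : N ^ α * c ≤ (c / d ^ v * N ^ (α - v)) * (N * d) ^ v := by
      rw [Real.mul_rpow hN.le hd.le]
      have hdv : (0:ℝ) < d ^ v := by positivity
      have hNe : N ^ (α - v) * N ^ v = N ^ α := by
        rw [← Real.rpow_add hN]; ring_nf
      have heq : c / d ^ v * N ^ (α - v) * (N ^ v * d ^ v)
          = c * (N ^ (α - v) * N ^ v) := by field_simp
      rw [heq, hNe, mul_comm]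
    calc N ^ α * c ≤ (c / d ^ v * N ^ (α - v)) * (N * d) ^ v := this
      _ ≤ (c / d ^ v * N ^ (α - v)) * (1 + N * d) ^ v := by
          apply mul_le_mul_of_nonneg_left h1 (by positivity)

/-- For fixed `ξ ∈ S^q` and `(t+2q)/u < v`, the rescaled series tends to 0. -/
theorem stmt1 (q t u v : ℝ) (hq : 0 ≤ q) (ht : -2 * q ≤ t) (hu : 0 < u) (hv : 0 ≤ v)
    (hlt : (t + 2 * q) / u < v) (ξ : ℕ → ℝ)
    (hξ : Summable (fun i : ℕ => (ξ i) ^ 2 * ((i : ℝ) + 1) ^ (2 * q))) :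
    Tendsto (fun N : ℝ =>
        N ^ ((t + 2 * q) / u) *
          ∑' i : ℕ, (ξ i) ^ 2 * ((i : ℝ) + 1) ^ (-t) / (1 + N * ((i : ℝ) + 1) ^ (-u)) ^ v)
      atTop (nhds 0) := by
  set α := (t + 2 * q) / u with hα_def
  have hα0 : 0 ≤ α := div_nonneg (by linarith) hu.le
  have huα : u * α = t + 2 * q := by
    rw [hα_def]; field_simp
  have key : Tendsto (fun N : ℝ =>
      ∑' i : ℕ, N ^ α * ((ξ i) ^ 2 * ((i : ℝ) + 1) ^ (-t) / (1 + N * ((i : ℝ) + 1) ^ (-u)) ^ v))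
      atTop (nhds 0) := by
    have := tendsto_tsum_of_dominated_convergence (𝓕 := atTop (α := ℝ))
      (f := fun N i => N ^ α * ((ξ i) ^ 2 * ((i : ℝ) + 1) ^ (-t) / (1 + N * ((i : ℝ) + 1) ^ (-u)) ^ v))
      (g := fun _ => (0:ℝ))
      (bound := fun i : ℕ => (ξ i) ^ 2 * ((i : ℝ) + 1) ^ (2 * q)) hξ ?_ ?_
    · simpa using this
    · intro i
      have hi : (0:ℝ) < (i : ℝ) + 1 := by positivity
      have hd : (0:ℝ) < ((i : ℝ) + 1) ^ (-u) := by positivity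
      have := aux_tendsto α v ((ξ i) ^ 2 * ((i : ℝ) + 1) ^ (-t)) (((i : ℝ) + 1) ^ (-u))
        hα0 hlt hd (by positivity)
      convert this using 2 with N
      ring
    · filter_upwards [eventually_ge_atTop 1] with N hN
      intro i
      have hN0 : (0:ℝ) < N := by linarith
      have hi : (0:ℝ) < (i : ℝ) + 1 := by positivity
      set x := N * ((i : ℝ) + 1) ^ (-u) with hx_def
      have hx : 0 < x := by positivity
      have h1xv : (0:ℝ) < (1 + x) ^ v := by positivity
      rw [Real.norm_eq_abs, abs_of_nonneg (by positivity)]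
      -- key: x^α ≤ (1+x)^v
      have hxα : x ^ α ≤ (1 + x) ^ v := by
        calc x ^ α ≤ (1 + x) ^ α :=
              Real.rpow_le_rpow hx.le (by linarith) hα0
          _ ≤ (1 + x) ^ v :=
              Real.rpow_le_rpow_of_exponent_le (by linarith) hlt.le
      -- rewrite x^α
      have hxα_eq : x ^ α = N ^ α * ((i : ℝ) + 1) ^ (-(t + 2 * q)) := by
        rw [hx_def, Real.mul_rpow hN0.le (by positivity), ← Real.rpow_mul hi.le,
          show (-u) * α = -(u * α) by ring, huα]
      -- goal: N^α * (ξ² (i+1)^{-t} / (1+x)^v) ≤ ξ² (i+1)^{2q}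
      rw [mul_div_assoc', div_le_iff₀ h1xv]
      have hstep : N ^ α * ((i : ℝ) + 1) ^ (-t) ≤ ((i : ℝ) + 1) ^ (2 * q) * (1 + x) ^ v := by
        calc N ^ α * ((i : ℝ) + 1) ^ (-t)
            = ((i : ℝ) + 1) ^ (2 * q) * (N ^ α * ((i : ℝ) + 1) ^ (-(t + 2 * q))) := by
              rw [← mul_assoc, mul_comm (((i:ℝ)+1) ^ (2*q)), mul_assoc,
                ← Real.rpow_add hi]
              ring_nf
          _ = ((i : ℝ) + 1) ^ (2 * q) * x ^ α := by rw [hxα_eq]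
          _ ≤ ((i : ℝ) + 1) ^ (2 * q) * (1 + x) ^ v :=
              mul_le_mul_of_nonneg_left hxα (by positivity)
      calc N ^ α * ((ξ i) ^ 2 * ((i : ℝ) + 1) ^ (-t))
          = (ξ i) ^ 2 * (N ^ α * ((i : ℝ) + 1) ^ (-t)) := by ring
        _ ≤ (ξ i) ^ 2 * (((i : ℝ) + 1) ^ (2 * q) * (1 + x) ^ v) :=
            mul_le_mul_of_nonneg_left hstep (by positivity)
        _ = (ξ i) ^ 2 * ((i : ℝ) + 1) ^ (2 * q) * (1 + x) ^ v := by ring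
  apply key.congr
  intro N
  rw [← tsum_mul_left]
end

section
/- For any q ≥ 0, t ≥ -2q, u > 0, v ≥ 0 with (t+2q)/u ≥ v, and any fixed sequence ξ with Σ_i ξ_i² i^{2q} < ∞, one has N^v · Σ_{i=1}^∞ ξ_i² i^{-t}/(1+N i^{-u})^v → Σ_{i=1}^∞ ξ_i² i^{uv-t} as N → ∞ (the limit being finite since ξ ∈ S^{(uv-t)/2}). -/
open Filter Topology

/-- For fixed `ξ ∈ S^q` and `(t+2q)/u ≥ v`, `N^v` times the series converges to
`∑ ξ_i² i^{uv - t}`, i.e. the squared `S^{(uv-t)/2}`-norm of `ξ`. -/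
theorem stmt2 (q t u v : ℝ) (hq : 0 ≤ q) (ht : -2 * q ≤ t) (hu : 0 < u) (hv : 0 ≤ v)
    (hge : v ≤ (t + 2 * q) / u) (ξ : ℕ → ℝ)
    (hξ : Summable (fun i : ℕ => (ξ i) ^ 2 * ((i : ℝ) + 1) ^ (2 * q))) :
    Tendsto (fun N : ℝ =>
        N ^ v *
          ∑' i : ℕ, (ξ i) ^ 2 * ((i : ℝ) + 1) ^ (-t) / (1 + N * ((i : ℝ) + 1) ^ (-u)) ^ v)
      atTop (nhds (∑' i : ℕ, (ξ i) ^ 2 * ((i : ℝ) + 1) ^ (u * v - t))) := by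
  have huv : u * v ≤ t + 2 * q := by
    have h' := (le_div_iff₀ hu).mp hge
    calc u * v = v * u := by ring
      _ ≤ t + 2 * q := h'
  have hx : ∀ i : ℕ, (1 : ℝ) ≤ (i : ℝ) + 1 := fun i => le_add_of_nonneg_left (Nat.cast_nonneg i)
  have hx0 : ∀ i : ℕ, (0 : ℝ) < (i : ℝ) + 1 := fun i => add_pos_of_nonneg_of_pos (Nat.cast_nonneg i) one_pos
  have key : Tendsto (fun N : ℝ => ∑' i : ℕ,
      N ^ v * ((ξ i) ^ 2 * ((i : ℝ) + 1) ^ (-t) / (1 + N * ((i : ℝ) + 1) ^ (-u)) ^ v))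
      atTop (nhds (∑' i : ℕ, (ξ i) ^ 2 * ((i : ℝ) + 1) ^ (u * v - t))) := by
    apply tendsto_tsum_of_dominated_convergence hξ
    · -- pointwise limit
      intro i
      set x : ℝ := (i : ℝ) + 1 with hxdef
      have hx1 : (1 : ℝ) ≤ x := hx i
      have hxpos : (0 : ℝ) < x := hx0 i
      have hxu : (0 : ℝ) < x ^ (-u) := Real.rpow_pos_of_pos hxpos _
      have h1 : Tendsto (fun N : ℝ => N / (1 + N * x ^ (-u))) atTop (nhds (x ^ u)) := by
        have h2 : Tendsto (fun N : ℝ => (N⁻¹ + x ^ (-u))⁻¹) atTop (nhds (x ^ u)) := by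
          have := (tendsto_inv_atTop_zero.add (tendsto_const_nhds (α := ℝ)
            (x := x ^ (-u)))).inv₀ (by simpa using hxu.ne')
          simpa [Real.rpow_neg hxpos.le] using this
        refine h2.congr' ?_
        filter_upwards [eventually_gt_atTop (0:ℝ)] with N hN
        have hNe : N ≠ 0 := hN.ne'
        have : N⁻¹ + x ^ (-u) = (1 + N * x ^ (-u)) / N := by field_simp
        rw [this, inv_div]
      have h3 : Tendsto (fun N : ℝ => (N / (1 + N * x ^ (-u))) ^ v) atTop
          (nhds ((x ^ u) ^ v)) := by
        have hcont : ContinuousAt (fun w : ℝ => w ^ v) (x ^ u) :=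
          Real.continuousAt_rpow_const _ _ (Or.inl (Real.rpow_pos_of_pos hxpos u).ne')
        exact hcont.tendsto.comp h1
      have h4 : Tendsto (fun N : ℝ => (ξ i) ^ 2 * x ^ (-t) * (N / (1 + N * x ^ (-u))) ^ v)
          atTop (nhds ((ξ i) ^ 2 * x ^ (u * v - t))) := by
        have h5 := h3.const_mul ((ξ i) ^ 2 * x ^ (-t))
        have hval : (ξ i) ^ 2 * x ^ (-t) * (x ^ u) ^ v = (ξ i) ^ 2 * x ^ (u * v - t) := by
          rw [← Real.rpow_mul hxpos.le, mul_assoc, ← Real.rpow_add hxpos, neg_add_eq_sub]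
        rw [← hval]
        exact h5
      refine h4.congr' ?_
      filter_upwards [eventually_gt_atTop (0:ℝ)] with N hN
      have hD : (0 : ℝ) < 1 + N * x ^ (-u) := by positivity
      rw [Real.div_rpow hN.le hD.le]
      ring
    · -- bound
      filter_upwards [eventually_gt_atTop (0:ℝ)] with N hN
      intro i
      set x : ℝ := (i : ℝ) + 1 with hxdef
      have hx1 : (1 : ℝ) ≤ x := hx i
      have hxpos : (0 : ℝ) < x := hx0 i
      have hxu : (0 : ℝ) < x ^ (-u) := Real.rpow_pos_of_pos hxpos _
      have hD : (0 : ℝ) < 1 + N * x ^ (-u) := by positivity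
      have hfnn : 0 ≤ N ^ v * ((ξ i) ^ 2 * x ^ (-t) / (1 + N * x ^ (-u)) ^ v) := by
        positivity
      rw [Real.norm_of_nonneg hfnn]
      have hdivle : N / (1 + N * x ^ (-u)) ≤ x ^ u := by
        have h1 : N / (1 + N * x ^ (-u)) ≤ N / (N * x ^ (-u)) := by
          apply div_le_div_of_nonneg_left hN.le (by positivity)
          linarith
        have h2 : N / (N * x ^ (-u)) = x ^ u := by
          rw [Real.rpow_neg hxpos.le]
          field_simp
        linarith [h1, h2.le]
      calc N ^ v * ((ξ i) ^ 2 * x ^ (-t) / (1 + N * x ^ (-u)) ^ v)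
          = (ξ i) ^ 2 * x ^ (-t) * (N / (1 + N * x ^ (-u))) ^ v := by
            rw [Real.div_rpow hN.le hD.le]; ring
        _ ≤ (ξ i) ^ 2 * x ^ (-t) * (x ^ u) ^ v := by
            apply mul_le_mul_of_nonneg_left _ (by positivity)
            exact Real.rpow_le_rpow (by positivity) hdivle hv
        _ = (ξ i) ^ 2 * x ^ (u * v - t) := by
            rw [← Real.rpow_mul hxpos.le, mul_assoc, ← Real.rpow_add hxpos, neg_add_eq_sub]
        _ ≤ (ξ i) ^ 2 * x ^ (2 * q) := by
            apply mul_le_mul_of_nonneg_left _ (by positivity)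
            exact Real.rpow_le_rpow_of_exponent_le hx1 (by linarith)
  refine key.congr ?_
  intro N
  rw [← tsum_mul_left]
end

section
/- Under the Bayesian sequence model with κ_i ≍ i^{-p} and λ_i = τ_n² i^{-1-2α}, the trace of the posterior covariance satisfies Σ_i λ_i/(1+nλ_iκ_i²) ≍ τ_n² (nτ_n²)^{-2α/(1+2α+2p)} as n → ∞, and the variance of the posterior mean satisfies Σ_i nλ_i²κ_i²/(1+nλ_iκ_i²)² ≍ τ_n² (nτ_n²)^{-2α/(1+2α+2p)} as well. -/
open Filter Topology

open Finset


lemma key_convex {t r : ℝ} (ht0 : 0 < t) (hr : 0 < r) :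
    1 + r * (1 - t) ≤ t ^ (-r) := by
  have h1 : t ^ (-r) = Real.exp (-r * Real.log t) := by
    rw [Real.rpow_def_of_pos ht0]; ring_nf
  have h2 := Real.add_one_le_exp (-r * Real.log t)
  have h3 : Real.log t ≤ t - 1 := Real.log_le_sub_one_of_pos ht0
  nlinarith [mul_le_mul_of_nonneg_left h3 hr.le]

lemma rpow_step {a r : ℝ} (ha : 1 ≤ a) (hr : 0 < r) :
    r * (a + 1) ^ (-1 - r) ≤ a ^ (-r) - (a + 1) ^ (-r) := by
  have ha0 : 0 < a := lt_of_lt_of_le one_pos ha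
  have hb0 : 0 < a + 1 := by linarith
  have ht : 0 < a / (a + 1) := by positivity
  have hk := key_convex ht hr
  have e1 : (a / (a + 1)) ^ (-r) = a ^ (-r) / (a + 1) ^ (-r) :=
    Real.div_rpow ha0.le hb0.le (-r)
  rw [e1] at hk
  have hbr : 0 < (a + 1) ^ (-r) := Real.rpow_pos_of_pos hb0 _
  have e2 : (a + 1) ^ (-1 - r) = (a + 1) ^ (-r) / (a + 1) := by
    rw [show (-1 - r : ℝ) = -r + (-1) by ring, Real.rpow_add hb0, Real.rpow_neg_one]
    ring
  rw [e2]
  have h4 : (1 + r * (1 - a / (a + 1))) * (a + 1) ^ (-r) ≤ a ^ (-r) := by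
    rw [← le_div_iff₀ hbr]; exact hk
  have h5 : 1 - a / (a + 1) = 1 / (a + 1) := by field_simp; ring
  rw [h5] at h4
  have h6 : r * ((a + 1) ^ (-r) / (a + 1)) = r * (1 / (a + 1)) * (a + 1) ^ (-r) := by
    ring
  rw [h6]
  nlinarith [h4]

lemma tail_sum_le {r : ℝ} (hr : 0 < r) (K M : ℕ) (hK : 1 ≤ K) :
    ∑ i ∈ Finset.Ico K M, ((i : ℝ) + 1) ^ (-1 - r) ≤ (K : ℝ) ^ (-r) / r := by
  set f : ℕ → ℝ := fun i => (i : ℝ) ^ (-r) with hf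
  have step : ∀ i ∈ Finset.Ico K M, ((i : ℝ) + 1) ^ (-1 - r) ≤ (f i - f (i + 1)) / r := by
    intro i hi
    have hKi : K ≤ i := (Finset.mem_Ico.mp hi).1
    have hi1 : (1 : ℝ) ≤ (i : ℝ) := by exact_mod_cast hK.trans hKi
    have h := rpow_step hi1 hr
    rw [le_div_iff₀ hr]
    have hfe : f (i + 1) = ((i : ℝ) + 1) ^ (-r) := by simp [hf]
    rw [hfe, hf]
    linarith [h]
  calc ∑ i ∈ Finset.Ico K M, ((i : ℝ) + 1) ^ (-1 - r)
      ≤ ∑ i ∈ Finset.Ico K M, (f i - f (i + 1)) / r := Finset.sum_le_sum step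
    _ = (∑ i ∈ Finset.Ico K M, (f i - f (i + 1))) / r := by rw [Finset.sum_div]
    _ ≤ (K : ℝ) ^ (-r) / r := by
        gcongr
        rcases le_or_gt M K with h | h
        · rw [Finset.Ico_eq_empty (by omega)]
          simp only [Finset.sum_empty]
          positivity
        · have tele : ∑ i ∈ Finset.Ico K M, (f i - f (i + 1)) = f K - f M := by
            rw [Finset.sum_Ico_eq_sum_range]
            have h2 := Finset.sum_range_sub' (fun j => f (K + j)) (M - K)
            simpa [Nat.add_sub_cancel' h.le, add_assoc] using h2
          rw [tele]
          have hfM : 0 ≤ f M := Real.rpow_nonneg (Nat.cast_nonneg M) _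
          have : f K = (K : ℝ) ^ (-r) := rfl
          linarith

lemma summable_shift {q : ℝ} (hq : 1 < q) : Summable (fun i : ℕ => ((i : ℝ) + 1) ^ (-q)) := by
  have h1 : Summable (fun n : ℕ => (n : ℝ) ^ (-q)) :=
    Real.summable_nat_rpow.mpr (by linarith)
  have h2 := (summable_nat_add_iff (f := fun n : ℕ => (n : ℝ) ^ (-q)) 1).mpr h1
  refine h2.congr fun i => ?_
  push_cast
  ring_nf

lemma upper_core {α p c : ℝ} (hα : 0 < α) (hp : 0 ≤ p) (hc : 0 < c) :
    ∃ C : ℝ, 0 < C ∧ ∀ T : ℝ, 1 ≤ T →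
      ∑' i : ℕ, ((i : ℝ) + 1) ^ (-1 - 2 * α) /
          (1 + c * T * ((i : ℝ) + 1) ^ (-1 - 2 * α - 2 * p))
        ≤ C * (T ^ ((1 : ℝ) / (1 + 2 * α + 2 * p))) ^ (-(2 * α)) := by
  refine ⟨(2 : ℝ) ^ (1 + 2 * p) / c + 1 / (2 * α), by positivity, fun T hT => ?_⟩
  set β : ℝ := 1 + 2 * α + 2 * p with hβdef
  have hβ : 0 < β := by positivity
  set N : ℝ := T ^ ((1 : ℝ) / β) with hNdef
  have hT0 : (0 : ℝ) < T := lt_of_lt_of_le one_pos hT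
  have hN1 : 1 ≤ N := Real.one_le_rpow hT (by positivity)
  have hN0 : 0 < N := lt_of_lt_of_le one_pos hN1
  have hNβ : N ^ β = T := by
    rw [hNdef, ← Real.rpow_mul hT0.le, one_div, inv_mul_cancel₀ hβ.ne', Real.rpow_one]
  set K : ℕ := ⌈N⌉₊ with hKdef
  have hK1 : 1 ≤ K := Nat.ceil_pos.mpr hN0
  have hKN : N ≤ (K : ℝ) := Nat.le_ceil N
  have hK2N : (K : ℝ) ≤ 2 * N := by
    have := Nat.ceil_lt_add_one hN0.le
    linarith
  set F : ℕ → ℝ := fun i => ((i : ℝ) + 1) ^ (-1 - 2 * α) /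
      (1 + c * T * ((i : ℝ) + 1) ^ (-1 - 2 * α - 2 * p)) with hF
  have hden : ∀ i : ℕ, (1 : ℝ) ≤ 1 + c * T * ((i : ℝ) + 1) ^ (-1 - 2 * α - 2 * p) := by
    intro i
    have : (0 : ℝ) ≤ c * T * ((i : ℝ) + 1) ^ (-1 - 2 * α - 2 * p) := by positivity
    linarith
  have hFnonneg : ∀ i, 0 ≤ F i := fun i =>
    div_nonneg (Real.rpow_nonneg (by positivity) _) (by linarith [hden i])
  have hFle : ∀ i, F i ≤ ((i : ℝ) + 1) ^ (-1 - 2 * α) := fun i =>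
    div_le_self (Real.rpow_nonneg (by positivity) _) (hden i)
  have hsummand : Summable (fun i : ℕ => ((i : ℝ) + 1) ^ (-1 - 2 * α)) := by
    have := summable_shift (q := 1 + 2 * α) (by linarith)
    refine this.congr fun i => ?_
    ring_nf
  have hsum : Summable F := Summable.of_nonneg_of_le hFnonneg hFle hsummand
  refine Summable.tsum_le_of_sum_le hsum fun s => ?_
  rw [← Finset.sum_filter_add_sum_filter_not s (fun i => i < K) F]
  have head : ∑ i ∈ s.filter (fun i => i < K), F i
      ≤ (2 : ℝ) ^ (1 + 2 * p) / c * N ^ (-(2 * α)) := by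
    have step1 : ∑ i ∈ s.filter (fun i => i < K), F i
        ≤ ∑ _i ∈ s.filter (fun i => i < K), (K : ℝ) ^ (2 * p) / (c * T) := by
      apply Finset.sum_le_sum
      intro i hi
      have hiK : i < K := (Finset.mem_filter.mp hi).2
      have hx : (0 : ℝ) < (i : ℝ) + 1 := by positivity
      have hd : (0 : ℝ) < c * T * ((i : ℝ) + 1) ^ (-1 - 2 * α - 2 * p) := by positivity
      have h1 : F i ≤ ((i : ℝ) + 1) ^ (-1 - 2 * α) /
          (c * T * ((i : ℝ) + 1) ^ (-1 - 2 * α - 2 * p)) := by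
        apply div_le_div_of_nonneg_left (Real.rpow_nonneg hx.le _) hd
        linarith
      have h2 : ((i : ℝ) + 1) ^ (-1 - 2 * α) /
          (c * T * ((i : ℝ) + 1) ^ (-1 - 2 * α - 2 * p)) = ((i : ℝ) + 1) ^ (2 * p) / (c * T) := by
        rw [show ((i : ℝ) + 1) ^ (-1 - 2 * α)
            = ((i : ℝ) + 1) ^ (2 * p) * ((i : ℝ) + 1) ^ (-1 - 2 * α - 2 * p) by
          rw [← Real.rpow_add hx]; ring_nf]
        rw [mul_comm c T]
        rw [mul_div_mul_right _ _ (ne_of_gt (Real.rpow_pos_of_pos hx _)), mul_comm T c]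
      have h3 : ((i : ℝ) + 1) ^ (2 * p) ≤ (K : ℝ) ^ (2 * p) := by
        apply Real.rpow_le_rpow hx.le ?_ (by positivity)
        exact_mod_cast Nat.succ_le_of_lt hiK
      calc F i ≤ ((i : ℝ) + 1) ^ (2 * p) / (c * T) := h2 ▸ h1
        _ ≤ (K : ℝ) ^ (2 * p) / (c * T) := by gcongr
    have step2 : ∑ _i ∈ s.filter (fun i => i < K), (K : ℝ) ^ (2 * p) / (c * T)
        ≤ (K : ℝ) * ((K : ℝ) ^ (2 * p) / (c * T)) := by
      rw [Finset.sum_const, nsmul_eq_mul]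
      have hcard : ((s.filter (fun i => i < K)).card : ℝ) ≤ (K : ℝ) := by
        exact_mod_cast (Finset.card_le_card (fun i hi => Finset.mem_range.mpr
          (Finset.mem_filter.mp hi).2)).trans_eq (Finset.card_range K)
      exact mul_le_mul_of_nonneg_right hcard (by positivity)
    have step3 : (K : ℝ) * ((K : ℝ) ^ (2 * p) / (c * T))
        ≤ (2 : ℝ) ^ (1 + 2 * p) / c * N ^ (-(2 * α)) := by
      have hKpos : (0 : ℝ) < K := by exact_mod_cast hK1
      have e1 : (K : ℝ) * ((K : ℝ) ^ (2 * p) / (c * T))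
          ≤ (2 * N) * ((2 * N) ^ (2 * p) / (c * T)) := by
        have h2 : (K : ℝ) ^ (2 * p) / (c * T) ≤ (2 * N) ^ (2 * p) / (c * T) := by
          gcongr
        exact mul_le_mul hK2N h2 (by positivity) (by positivity)
      have e2 : (2 * N) * ((2 * N) ^ (2 * p) / (c * T))
          = (2 : ℝ) ^ (1 + 2 * p) / c * N ^ (-(2 * α)) := by
        rw [Real.mul_rpow (by norm_num) hN0.le]
        rw [show ((2 : ℝ)) ^ (1 + 2 * p) = 2 * (2 : ℝ) ^ (2 * p) by
          rw [Real.rpow_add (by norm_num), Real.rpow_one]]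
        rw [show N ^ (-(2 * α)) = N ^ (1 + 2 * p) / T by
          rw [← hNβ, ← Real.rpow_sub hN0]
          congr 1
          rw [hβdef]; ring]
        rw [show N ^ (1 + 2 * p) = N * N ^ (2 * p) by
          rw [Real.rpow_add hN0, Real.rpow_one]]
        field_simp
      linarith
    linarith
  have tail : ∑ i ∈ s.filter (fun i => ¬ i < K), F i ≤ 1 / (2 * α) * N ^ (-(2 * α)) := by
    set M := s.sup id + 1 with hM
    have hsub : s.filter (fun i => ¬ i < K) ⊆ Finset.Ico K M := by
      intro i hi
      obtain ⟨his, hik⟩ := Finset.mem_filter.mp hi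
      refine Finset.mem_Ico.mpr ⟨by omega, ?_⟩
      have : i ≤ s.sup id := Finset.le_sup (f := id) his
      omega
    calc ∑ i ∈ s.filter (fun i => ¬ i < K), F i
        ≤ ∑ i ∈ s.filter (fun i => ¬ i < K), ((i : ℝ) + 1) ^ (-1 - 2 * α) :=
          Finset.sum_le_sum fun i _ => hFle i
      _ ≤ ∑ i ∈ Finset.Ico K M, ((i : ℝ) + 1) ^ (-1 - 2 * α) :=
          Finset.sum_le_sum_of_subset_of_nonneg hsub
            (fun i _ _ => Real.rpow_nonneg (by positivity) _)
      _ ≤ (K : ℝ) ^ (-(2 * α)) / (2 * α) := tail_sum_le (by linarith) K M hK1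
      _ ≤ N ^ (-(2 * α)) / (2 * α) := by
          have hle := Real.rpow_le_rpow_of_nonpos hN0 hKN (by linarith : -(2 * α) ≤ 0)
          exact ((div_le_div_iff_of_pos_right (by linarith : (0:ℝ) < 2 * α)).mpr hle)
      _ = 1 / (2 * α) * N ^ (-(2 * α)) := by ring
  calc ∑ i ∈ s.filter (fun i => i < K), F i + ∑ i ∈ s.filter (fun i => ¬ i < K), F i
      ≤ (2 : ℝ) ^ (1 + 2 * p) / c * N ^ (-(2 * α)) + 1 / (2 * α) * N ^ (-(2 * α)) :=
        add_le_add head tail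
    _ = ((2 : ℝ) ^ (1 + 2 * p) / c + 1 / (2 * α)) * N ^ (-(2 * α)) := by ring

set_option maxHeartbeats 2000000 in
/-- Trace of the posterior covariance and total variance of the posterior mean:
both `∑ λᵢ/(1+nλᵢκᵢ²)` and `∑ nλᵢ²κᵢ²/(1+nλᵢκᵢ²)²` are of exact order
`τ_n² (nτ_n²)^{-2α/(1+2α+2p)}`. -/
theorem stmt10 (p α : ℝ) (hp : 0 ≤ p) (hα : 0 < α)
    (τ : ℕ → ℝ) (hτpos : ∀ n, 0 < τ n)
    (hnτ : Tendsto (fun n : ℕ => (n : ℝ) * (τ n) ^ 2) atTop atTop)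
    (κ : ℕ → ℝ) (c₁ c₂ : ℝ) (hc₁ : 0 < c₁)
    (hκ : ∀ i : ℕ, c₁ * ((i : ℝ) + 1) ^ (-p) ≤ κ i ∧ κ i ≤ c₂ * ((i : ℝ) + 1) ^ (-p)) :
    let lam : ℕ → ℕ → ℝ := fun n i => (τ n) ^ 2 * ((i : ℝ) + 1) ^ (-1 - 2 * α)
    let rate : ℕ → ℝ := fun n =>
      (τ n) ^ 2 * ((n : ℝ) * (τ n) ^ 2) ^ (-(2 * α / (1 + 2 * α + 2 * p)))
    (∃ c C : ℝ, 0 < c ∧ c ≤ C ∧ ∀ᶠ n : ℕ in atTop,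
      c * rate n ≤ (∑' i : ℕ, lam n i / (1 + (n : ℝ) * lam n i * (κ i) ^ 2)) ∧
      (∑' i : ℕ, lam n i / (1 + (n : ℝ) * lam n i * (κ i) ^ 2)) ≤ C * rate n) ∧
    (∃ c C : ℝ, 0 < c ∧ c ≤ C ∧ ∀ᶠ n : ℕ in atTop,
      c * rate n ≤ (∑' i : ℕ, (n : ℝ) * (lam n i) ^ 2 * (κ i) ^ 2 /
          (1 + (n : ℝ) * lam n i * (κ i) ^ 2) ^ 2) ∧
      (∑' i : ℕ, (n : ℝ) * (lam n i) ^ 2 * (κ i) ^ 2 /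
          (1 + (n : ℝ) * lam n i * (κ i) ^ 2) ^ 2) ≤ C * rate n) := by
  intro lam rate
  -- basic positivity facts
  have hκpos : ∀ i, 0 < κ i := fun i =>
    lt_of_lt_of_le (by positivity) (hκ i).1
  have hc₂ : 0 < c₂ := by
    have h0 := hκ 0
    have e : ((0 : ℕ) : ℝ) + 1 = 1 := by norm_num
    rw [e, Real.one_rpow, mul_one, mul_one] at h0
    linarith [hκpos 0]
  have hux : ∀ i : ℕ, (0 : ℝ) < (i : ℝ) + 1 := fun i => by positivity
  -- squared κ bounds
  have hκsq_low : ∀ i : ℕ, c₁ ^ 2 * ((i : ℝ) + 1) ^ (-(2 * p)) ≤ (κ i) ^ 2 := by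
    intro i
    have h := (hκ i).1
    have hsq := pow_le_pow_left₀ (by positivity) h 2
    calc c₁ ^ 2 * ((i : ℝ) + 1) ^ (-(2 * p))
        = (c₁ * ((i : ℝ) + 1) ^ (-p)) ^ 2 := by
          rw [mul_pow, sq (((i : ℝ) + 1) ^ (-p)), ← Real.rpow_add (hux i)]
          ring_nf
      _ ≤ (κ i) ^ 2 := hsq
  have hκsq_high : ∀ i : ℕ, (κ i) ^ 2 ≤ c₂ ^ 2 * ((i : ℝ) + 1) ^ (-(2 * p)) := by
    intro i
    have h := (hκ i).2
    have hsq := pow_le_pow_left₀ (hκpos i).le h 2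
    calc (κ i) ^ 2 ≤ (c₂ * ((i : ℝ) + 1) ^ (-p)) ^ 2 := hsq
      _ = c₂ ^ 2 * ((i : ℝ) + 1) ^ (-(2 * p)) := by
          rw [mul_pow, sq (((i : ℝ) + 1) ^ (-p)), ← Real.rpow_add (hux i)]
          ring_nf
  have hmul : ∀ i : ℕ, ((i : ℝ) + 1) ^ (-1 - 2 * α) * ((i : ℝ) + 1) ^ (-(2 * p))
      = ((i : ℝ) + 1) ^ (-1 - 2 * α - 2 * p) := by
    intro i
    rw [← Real.rpow_add (hux i)]
    ring_nf
  obtain ⟨C₁, hC₁pos, hC₁⟩ := upper_core (α := α) (p := p) (c := c₁ ^ 2) hα hp (by positivity)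
  -- eventual regime
  have hev : ∀ᶠ n : ℕ in atTop, (1 : ℝ) ≤ (n : ℝ) * (τ n) ^ 2 := hnτ.eventually_ge_atTop 1
  set clow1 : ℝ := (3 : ℝ) ^ (-1 - 2 * α) / (1 + c₂ ^ 2) with hclow1
  set clow2 : ℝ := (3 : ℝ) ^ (-1 - 2 * α) * (c₁ ^ 2 * (3 : ℝ) ^ (-1 - 2 * α - 2 * p))
      / (1 + c₂ ^ 2) ^ 2 with hclow2
  have hclow1pos : 0 < clow1 := by rw [hclow1]; positivity
  have hclow2pos : 0 < clow2 := by rw [hclow2]; positivity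
  have hrate_nonneg : ∀ n, 0 ≤ rate n := fun n => by
    simp only [rate]
    positivity
  -- the main eventual estimate
  have main : ∀ᶠ n : ℕ in atTop,
      (clow1 * rate n ≤ (∑' i : ℕ, lam n i / (1 + (n : ℝ) * lam n i * (κ i) ^ 2)) ∧
        (∑' i : ℕ, lam n i / (1 + (n : ℝ) * lam n i * (κ i) ^ 2)) ≤ C₁ * rate n) ∧
      (clow2 * rate n ≤ (∑' i : ℕ, (n : ℝ) * (lam n i) ^ 2 * (κ i) ^ 2 /
            (1 + (n : ℝ) * lam n i * (κ i) ^ 2) ^ 2) ∧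
        (∑' i : ℕ, (n : ℝ) * (lam n i) ^ 2 * (κ i) ^ 2 /
            (1 + (n : ℝ) * lam n i * (κ i) ^ 2) ^ 2) ≤ C₁ * rate n) := by
    filter_upwards [hev] with n hT
    set T : ℝ := (n : ℝ) * (τ n) ^ 2 with hTdef
    have hT0 : (0 : ℝ) < T := lt_of_lt_of_le one_pos hT
    have hτ2 : (0 : ℝ) < (τ n) ^ 2 := pow_pos (hτpos n) 2
    set N : ℝ := T ^ ((1 : ℝ) / (1 + 2 * α + 2 * p)) with hNdef
    have hN1 : 1 ≤ N := Real.one_le_rpow hT (by positivity)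
    have hN0 : 0 < N := lt_of_lt_of_le one_pos hN1
    have hNβ : N ^ (1 + 2 * α + 2 * p) = T := by
      rw [hNdef, ← Real.rpow_mul hT0.le, one_div,
        inv_mul_cancel₀ (by positivity : (1 + 2 * α + 2 * p : ℝ) ≠ 0), Real.rpow_one]
    have hrate : rate n = (τ n) ^ 2 * N ^ (-(2 * α)) := by
      simp only [rate, hNdef, ← hTdef]
      rw [← Real.rpow_mul hT0.le]
      congr 1
      ring
    -- bounds on x_i := n * lam n i * κ i ^ 2
    have hlam_eq : ∀ i : ℕ, lam n i = (τ n) ^ 2 * ((i : ℝ) + 1) ^ (-1 - 2 * α) := fun i => rfl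
    have hlam_nonneg : ∀ i : ℕ, 0 ≤ lam n i := fun i => by
      rw [hlam_eq]; positivity
    have hXlow : ∀ i : ℕ, c₁ ^ 2 * T * ((i : ℝ) + 1) ^ (-1 - 2 * α - 2 * p)
        ≤ (n : ℝ) * lam n i * (κ i) ^ 2 := by
      intro i
      have h := mul_le_mul_of_nonneg_left (hκsq_low i)
        (by positivity : (0 : ℝ) ≤ (n : ℝ) * ((τ n) ^ 2 * ((i : ℝ) + 1) ^ (-1 - 2 * α)))
      calc c₁ ^ 2 * T * ((i : ℝ) + 1) ^ (-1 - 2 * α - 2 * p)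
          = (n : ℝ) * ((τ n) ^ 2 * ((i : ℝ) + 1) ^ (-1 - 2 * α))
              * (c₁ ^ 2 * ((i : ℝ) + 1) ^ (-(2 * p))) := by
            rw [hTdef, ← hmul i]; ring
        _ ≤ (n : ℝ) * ((τ n) ^ 2 * ((i : ℝ) + 1) ^ (-1 - 2 * α)) * (κ i) ^ 2 := h
        _ = (n : ℝ) * lam n i * (κ i) ^ 2 := by rw [hlam_eq]
    have hXhigh : ∀ i : ℕ, (n : ℝ) * lam n i * (κ i) ^ 2
        ≤ c₂ ^ 2 * T * ((i : ℝ) + 1) ^ (-1 - 2 * α - 2 * p) := by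
      intro i
      have h := mul_le_mul_of_nonneg_left (hκsq_high i)
        (by positivity : (0 : ℝ) ≤ (n : ℝ) * ((τ n) ^ 2 * ((i : ℝ) + 1) ^ (-1 - 2 * α)))
      calc (n : ℝ) * lam n i * (κ i) ^ 2
          = (n : ℝ) * ((τ n) ^ 2 * ((i : ℝ) + 1) ^ (-1 - 2 * α)) * (κ i) ^ 2 := by
            rw [hlam_eq]
        _ ≤ (n : ℝ) * ((τ n) ^ 2 * ((i : ℝ) + 1) ^ (-1 - 2 * α))
              * (c₂ ^ 2 * ((i : ℝ) + 1) ^ (-(2 * p))) := h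
        _ = c₂ ^ 2 * T * ((i : ℝ) + 1) ^ (-1 - 2 * α - 2 * p) := by
            rw [hTdef, ← hmul i]; ring
    have hXnonneg : ∀ i : ℕ, 0 ≤ (n : ℝ) * lam n i * (κ i) ^ 2 := fun i =>
      le_trans (by positivity) (hXlow i)
    have hden_pos : ∀ i : ℕ, (0 : ℝ) < 1 + (n : ℝ) * lam n i * (κ i) ^ 2 := fun i => by
      linarith [hXnonneg i]
    -- summability
    have hsummand : Summable (fun i : ℕ => (τ n) ^ 2 * ((i : ℝ) + 1) ^ (-1 - 2 * α)) := by
      apply Summable.mul_left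
      exact (summable_shift (q := 1 + 2 * α) (by linarith)).congr fun i => by ring_nf
    have hS1le : ∀ i : ℕ, lam n i / (1 + (n : ℝ) * lam n i * (κ i) ^ 2)
        ≤ (τ n) ^ 2 * ((i : ℝ) + 1) ^ (-1 - 2 * α) := fun i => by
      rw [← hlam_eq i]
      exact div_le_self (hlam_nonneg i) (by linarith [hXnonneg i])
    have hS1nonneg : ∀ i : ℕ, 0 ≤ lam n i / (1 + (n : ℝ) * lam n i * (κ i) ^ 2) := fun i =>
      div_nonneg (hlam_nonneg i) (hden_pos i).le
    have hsumS1 : Summable (fun i : ℕ => lam n i / (1 + (n : ℝ) * lam n i * (κ i) ^ 2)) :=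
      Summable.of_nonneg_of_le hS1nonneg hS1le hsummand
    have hS2eq : ∀ i : ℕ, (n : ℝ) * (lam n i) ^ 2 * (κ i) ^ 2 /
        (1 + (n : ℝ) * lam n i * (κ i) ^ 2) ^ 2
        = lam n i * ((n : ℝ) * lam n i * (κ i) ^ 2) /
            (1 + (n : ℝ) * lam n i * (κ i) ^ 2) ^ 2 := fun i => by ring_nf
    have hS2leS1 : ∀ i : ℕ, (n : ℝ) * (lam n i) ^ 2 * (κ i) ^ 2 /
        (1 + (n : ℝ) * lam n i * (κ i) ^ 2) ^ 2
        ≤ lam n i / (1 + (n : ℝ) * lam n i * (κ i) ^ 2) := by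
      intro i
      rw [hS2eq i, div_le_div_iff₀ (by positivity) (hden_pos i)]
      have hx := hXnonneg i
      have hl := hlam_nonneg i
      nlinarith [mul_nonneg hl hx, hden_pos i]
    have hS2nonneg : ∀ i : ℕ, 0 ≤ (n : ℝ) * (lam n i) ^ 2 * (κ i) ^ 2 /
        (1 + (n : ℝ) * lam n i * (κ i) ^ 2) ^ 2 := fun i => by
      apply div_nonneg _ (by positivity)
      have := hlam_nonneg i
      positivity
    have hsumS2 : Summable (fun i : ℕ => (n : ℝ) * (lam n i) ^ 2 * (κ i) ^ 2 /
        (1 + (n : ℝ) * lam n i * (κ i) ^ 2) ^ 2) :=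
      Summable.of_nonneg_of_le hS2nonneg
        (fun i => le_trans (hS2leS1 i) (hS1le i)) hsummand
    -- upper bound for S1
    have hGnonneg : ∀ i : ℕ, 0 ≤ ((i : ℝ) + 1) ^ (-1 - 2 * α) /
        (1 + c₁ ^ 2 * T * ((i : ℝ) + 1) ^ (-1 - 2 * α - 2 * p)) := fun i => by positivity
    have hsumG : Summable (fun i : ℕ => ((i : ℝ) + 1) ^ (-1 - 2 * α) /
        (1 + c₁ ^ 2 * T * ((i : ℝ) + 1) ^ (-1 - 2 * α - 2 * p))) := by
      apply Summable.of_nonneg_of_le hGnonneg (fun i => div_le_self (by positivity) ?_)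
        ((summable_shift (q := 1 + 2 * α) (by linarith)).congr fun i => by ring_nf)
      have : (0:ℝ) ≤ c₁ ^ 2 * T * ((i : ℝ) + 1) ^ (-1 - 2 * α - 2 * p) := by positivity
      linarith
    have hub1 : (∑' i : ℕ, lam n i / (1 + (n : ℝ) * lam n i * (κ i) ^ 2)) ≤ C₁ * rate n := by
      have term : ∀ i : ℕ, lam n i / (1 + (n : ℝ) * lam n i * (κ i) ^ 2)
          ≤ (τ n) ^ 2 * (((i : ℝ) + 1) ^ (-1 - 2 * α) /
              (1 + c₁ ^ 2 * T * ((i : ℝ) + 1) ^ (-1 - 2 * α - 2 * p))) := by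
        intro i
        have hX := hXlow i
        rw [hlam_eq i] at hX
        rw [hlam_eq i, mul_div_assoc ((τ n) ^ 2)]
        apply mul_le_mul_of_nonneg_left ?_ hτ2.le
        apply div_le_div_of_nonneg_left (by positivity) ?_ ?_
        · have : (0:ℝ) ≤ c₁ ^ 2 * T * ((i : ℝ) + 1) ^ (-1 - 2 * α - 2 * p) := by positivity
          linarith
        · linarith [hX]
      calc (∑' i : ℕ, lam n i / (1 + (n : ℝ) * lam n i * (κ i) ^ 2))
          ≤ ∑' i : ℕ, (τ n) ^ 2 * (((i : ℝ) + 1) ^ (-1 - 2 * α) /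
              (1 + c₁ ^ 2 * T * ((i : ℝ) + 1) ^ (-1 - 2 * α - 2 * p))) :=
            Summable.tsum_le_tsum term hsumS1 (hsumG.mul_left _)
        _ = (τ n) ^ 2 * ∑' i : ℕ, ((i : ℝ) + 1) ^ (-1 - 2 * α) /
              (1 + c₁ ^ 2 * T * ((i : ℝ) + 1) ^ (-1 - 2 * α - 2 * p)) := tsum_mul_left
        _ ≤ (τ n) ^ 2 * (C₁ * N ^ (-(2 * α))) := by
            have := hC₁ T hT
            rw [← hNdef] at this
            exact mul_le_mul_of_nonneg_left this hτ2.le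
        _ = C₁ * rate n := by rw [hrate]; ring
    have hub2 : (∑' i : ℕ, (n : ℝ) * (lam n i) ^ 2 * (κ i) ^ 2 /
        (1 + (n : ℝ) * lam n i * (κ i) ^ 2) ^ 2) ≤ C₁ * rate n :=
      le_trans (Summable.tsum_le_tsum hS2leS1 hsumS2 hsumS1) hub1
    -- lower bounds
    set K : ℕ := ⌈N⌉₊ with hKdef
    have hK1 : 1 ≤ K := Nat.ceil_pos.mpr hN0
    have hKN : N ≤ (K : ℝ) := Nat.le_ceil N
    have hKN1 : (K : ℝ) ≤ N + 1 := by
      have := Nat.ceil_lt_add_one hN0.le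
      linarith
    set t : Finset ℕ := Finset.Ico (K - 1) (2 * K - 1) with htdef
    have hcardt : (t.card : ℝ) = (K : ℝ) := by
      rw [htdef, Nat.card_Ico]
      congr 1
      omega
    have hmem : ∀ i ∈ t, (K : ℝ) ≤ (i : ℝ) + 1 ∧ (i : ℝ) + 1 ≤ 3 * N := by
      intro i hi
      rw [htdef, Finset.mem_Ico] at hi
      constructor
      · exact_mod_cast (show K ≤ i + 1 by omega)
      · have h2 : i + 2 ≤ 2 * K := by omega
        have h2' : (i : ℝ) + 2 ≤ 2 * (K : ℝ) := by exact_mod_cast h2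
        linarith
    -- bounds on M_i for i ∈ t
    have hMbounds : ∀ i ∈ t, (3 : ℝ) ^ (-1 - 2 * α - 2 * p)
        ≤ T * ((i : ℝ) + 1) ^ (-1 - 2 * α - 2 * p) ∧
        T * ((i : ℝ) + 1) ^ (-1 - 2 * α - 2 * p) ≤ 1 := by
      intro i hi
      obtain ⟨h1, h2⟩ := hmem i hi
      have hNu : N ≤ (i : ℝ) + 1 := le_trans hKN h1
      have hexp : (-1 - 2 * α - 2 * p : ℝ) ≤ 0 := by linarith
      constructor
      · have hr : ((3 : ℝ) * N) ^ (-1 - 2 * α - 2 * p) ≤ ((i : ℝ) + 1) ^ (-1 - 2 * α - 2 * p) :=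
          Real.rpow_le_rpow_of_nonpos (hux i) h2 hexp
        have hNN : N ^ (1 + 2 * α + 2 * p) * N ^ (-1 - 2 * α - 2 * p) = 1 := by
          rw [← Real.rpow_add hN0,
            show (1 + 2 * α + 2 * p) + (-1 - 2 * α - 2 * p) = (0:ℝ) by ring, Real.rpow_zero]
        have e : T * ((3 : ℝ) * N) ^ (-1 - 2 * α - 2 * p) = (3 : ℝ) ^ (-1 - 2 * α - 2 * p) := by
          rw [Real.mul_rpow (by norm_num) hN0.le, ← hNβ]
          linear_combination ((3:ℝ) ^ (-1 - 2 * α - 2 * p)) * hNN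
        calc (3 : ℝ) ^ (-1 - 2 * α - 2 * p) = T * ((3 : ℝ) * N) ^ (-1 - 2 * α - 2 * p) := e.symm
          _ ≤ T * ((i : ℝ) + 1) ^ (-1 - 2 * α - 2 * p) :=
            mul_le_mul_of_nonneg_left hr hT0.le
      · have hr : ((i : ℝ) + 1) ^ (-1 - 2 * α - 2 * p) ≤ N ^ (-1 - 2 * α - 2 * p) :=
          Real.rpow_le_rpow_of_nonpos hN0 hNu hexp
        have hNN : N ^ (1 + 2 * α + 2 * p) * N ^ (-1 - 2 * α - 2 * p) = 1 := by
          rw [← Real.rpow_add hN0,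
            show (1 + 2 * α + 2 * p) + (-1 - 2 * α - 2 * p) = (0:ℝ) by ring, Real.rpow_zero]
        have e : T * N ^ (-1 - 2 * α - 2 * p) = 1 := by rw [← hNβ]; exact hNN
        calc T * ((i : ℝ) + 1) ^ (-1 - 2 * α - 2 * p)
            ≤ T * N ^ (-1 - 2 * α - 2 * p) := mul_le_mul_of_nonneg_left hr hT0.le
          _ = 1 := e
    have hlam_low : ∀ i ∈ t, (τ n) ^ 2 * ((3 : ℝ) * N) ^ (-1 - 2 * α) ≤ lam n i := by
      intro i hi
      obtain ⟨_, h2⟩ := hmem i hi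
      rw [hlam_eq i]
      apply mul_le_mul_of_nonneg_left _ hτ2.le
      exact Real.rpow_le_rpow_of_nonpos (hux i) h2 (by linarith)
    have hNlow : N * ((τ n) ^ 2 * ((3 : ℝ) * N) ^ (-1 - 2 * α))
        = (3 : ℝ) ^ (-1 - 2 * α) * ((τ n) ^ 2 * N ^ (-(2 * α))) := by
      rw [Real.mul_rpow (by norm_num) hN0.le,
        show (-(2 * α) : ℝ) = 1 + (-1 - 2 * α) by ring, Real.rpow_add hN0, Real.rpow_one]
      ring
    -- lower bound S1
    have hlb1 : clow1 * rate n ≤ ∑' i : ℕ, lam n i / (1 + (n : ℝ) * lam n i * (κ i) ^ 2) := by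
      have term : ∀ i ∈ t, (τ n) ^ 2 * ((3 : ℝ) * N) ^ (-1 - 2 * α) / (1 + c₂ ^ 2)
          ≤ lam n i / (1 + (n : ℝ) * lam n i * (κ i) ^ 2) := by
        intro i hi
        have hx_high : (n : ℝ) * lam n i * (κ i) ^ 2 ≤ c₂ ^ 2 :=
          le_trans (hXhigh i) (by nlinarith [(hMbounds i hi).2, sq_nonneg c₂])
        exact div_le_div₀ (hlam_nonneg i) (hlam_low i hi) (hden_pos i) (by linarith)
      have key : clow1 * rate n
          = N * ((τ n) ^ 2 * ((3 : ℝ) * N) ^ (-1 - 2 * α) / (1 + c₂ ^ 2)) := by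
        calc clow1 * rate n
            = (3 : ℝ) ^ (-1 - 2 * α) * ((τ n) ^ 2 * N ^ (-(2 * α))) / (1 + c₂ ^ 2) := by
              rw [hrate, hclow1]; ring
          _ = N * ((τ n) ^ 2 * ((3 : ℝ) * N) ^ (-1 - 2 * α)) / (1 + c₂ ^ 2) := by
              rw [hNlow]
          _ = N * ((τ n) ^ 2 * ((3 : ℝ) * N) ^ (-1 - 2 * α) / (1 + c₂ ^ 2)) := by ring
      rw [key]
      calc N * ((τ n) ^ 2 * ((3 : ℝ) * N) ^ (-1 - 2 * α) / (1 + c₂ ^ 2))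
          ≤ (K : ℝ) * ((τ n) ^ 2 * ((3 : ℝ) * N) ^ (-1 - 2 * α) / (1 + c₂ ^ 2)) :=
            mul_le_mul_of_nonneg_right hKN (by positivity)
        _ = ∑ _i ∈ t, (τ n) ^ 2 * ((3 : ℝ) * N) ^ (-1 - 2 * α) / (1 + c₂ ^ 2) := by
            rw [Finset.sum_const, nsmul_eq_mul, hcardt]
        _ ≤ ∑ i ∈ t, lam n i / (1 + (n : ℝ) * lam n i * (κ i) ^ 2) :=
            Finset.sum_le_sum term
        _ ≤ ∑' i : ℕ, lam n i / (1 + (n : ℝ) * lam n i * (κ i) ^ 2) :=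
            Summable.sum_le_tsum t (fun i _ => hS1nonneg i) hsumS1
    -- lower bound S2
    have hlb2 : clow2 * rate n ≤ ∑' i : ℕ, (n : ℝ) * (lam n i) ^ 2 * (κ i) ^ 2 /
        (1 + (n : ℝ) * lam n i * (κ i) ^ 2) ^ 2 := by
      have term : ∀ i ∈ t,
          (τ n) ^ 2 * ((3 : ℝ) * N) ^ (-1 - 2 * α) * (c₁ ^ 2 * (3 : ℝ) ^ (-1 - 2 * α - 2 * p))
            / (1 + c₂ ^ 2) ^ 2
          ≤ (n : ℝ) * (lam n i) ^ 2 * (κ i) ^ 2 /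
              (1 + (n : ℝ) * lam n i * (κ i) ^ 2) ^ 2 := by
        intro i hi
        have hx_high : (n : ℝ) * lam n i * (κ i) ^ 2 ≤ c₂ ^ 2 :=
          le_trans (hXhigh i) (by nlinarith [(hMbounds i hi).2, sq_nonneg c₂])
        have hx_low : c₁ ^ 2 * (3 : ℝ) ^ (-1 - 2 * α - 2 * p)
            ≤ (n : ℝ) * lam n i * (κ i) ^ 2 := by
          calc c₁ ^ 2 * (3 : ℝ) ^ (-1 - 2 * α - 2 * p)
              ≤ c₁ ^ 2 * (T * ((i : ℝ) + 1) ^ (-1 - 2 * α - 2 * p)) :=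
                mul_le_mul_of_nonneg_left (hMbounds i hi).1 (by positivity)
            _ = c₁ ^ 2 * T * ((i : ℝ) + 1) ^ (-1 - 2 * α - 2 * p) := by ring
            _ ≤ (n : ℝ) * lam n i * (κ i) ^ 2 := hXlow i
        rw [hS2eq i]
        apply div_le_div₀ (mul_nonneg (hlam_nonneg i) (hXnonneg i)) ?_ (by positivity) ?_
        · exact mul_le_mul (hlam_low i hi) hx_low (by positivity) (hlam_nonneg i)
        · apply pow_le_pow_left₀ (hden_pos i).le (by linarith) 2
      have key : clow2 * rate n
          = N * ((τ n) ^ 2 * ((3 : ℝ) * N) ^ (-1 - 2 * α)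
              * (c₁ ^ 2 * (3 : ℝ) ^ (-1 - 2 * α - 2 * p)) / (1 + c₂ ^ 2) ^ 2) := by
        calc clow2 * rate n
            = (3 : ℝ) ^ (-1 - 2 * α) * ((τ n) ^ 2 * N ^ (-(2 * α)))
                * (c₁ ^ 2 * (3 : ℝ) ^ (-1 - 2 * α - 2 * p)) / (1 + c₂ ^ 2) ^ 2 := by
              rw [hrate, hclow2]; ring
          _ = N * ((τ n) ^ 2 * ((3 : ℝ) * N) ^ (-1 - 2 * α))
                * (c₁ ^ 2 * (3 : ℝ) ^ (-1 - 2 * α - 2 * p)) / (1 + c₂ ^ 2) ^ 2 := by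
              rw [hNlow]
          _ = N * ((τ n) ^ 2 * ((3 : ℝ) * N) ^ (-1 - 2 * α)
                * (c₁ ^ 2 * (3 : ℝ) ^ (-1 - 2 * α - 2 * p)) / (1 + c₂ ^ 2) ^ 2) := by ring
      rw [key]
      calc N * ((τ n) ^ 2 * ((3 : ℝ) * N) ^ (-1 - 2 * α)
              * (c₁ ^ 2 * (3 : ℝ) ^ (-1 - 2 * α - 2 * p)) / (1 + c₂ ^ 2) ^ 2)
          ≤ (K : ℝ) * ((τ n) ^ 2 * ((3 : ℝ) * N) ^ (-1 - 2 * α)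
              * (c₁ ^ 2 * (3 : ℝ) ^ (-1 - 2 * α - 2 * p)) / (1 + c₂ ^ 2) ^ 2) :=
            mul_le_mul_of_nonneg_right hKN (by positivity)
        _ = ∑ _i ∈ t, (τ n) ^ 2 * ((3 : ℝ) * N) ^ (-1 - 2 * α)
              * (c₁ ^ 2 * (3 : ℝ) ^ (-1 - 2 * α - 2 * p)) / (1 + c₂ ^ 2) ^ 2 := by
            rw [Finset.sum_const, nsmul_eq_mul, hcardt]
        _ ≤ ∑ i ∈ t, (n : ℝ) * (lam n i) ^ 2 * (κ i) ^ 2 /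
              (1 + (n : ℝ) * lam n i * (κ i) ^ 2) ^ 2 := Finset.sum_le_sum term
        _ ≤ ∑' i : ℕ, (n : ℝ) * (lam n i) ^ 2 * (κ i) ^ 2 /
              (1 + (n : ℝ) * lam n i * (κ i) ^ 2) ^ 2 :=
            Summable.sum_le_tsum t (fun i _ => hS2nonneg i) hsumS2
    exact ⟨⟨hlb1, hub1⟩, ⟨hlb2, hub2⟩⟩
  constructor
  · refine ⟨clow1, max C₁ clow1, hclow1pos, le_max_right _ _, ?_⟩
    filter_upwards [main] with n hn
    exact ⟨hn.1.1, le_trans hn.1.2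
      (mul_le_mul_of_nonneg_right (le_max_left _ _) (hrate_nonneg n))⟩
  · refine ⟨clow2, max C₁ clow2, hclow2pos, le_max_right _ _, ?_⟩
    filter_upwards [main] with n hn
    exact ⟨hn.2.1, le_trans hn.2.2
      (mul_le_mul_of_nonneg_right (le_max_left _ _) (hrate_nonneg n))⟩
end

section
/- Under the Bayesian sequence model with κ_i ≍ i^{-p} and λ_i = τ_n² i^{-1-2α}, the per-coordinate difference s_{i,n} − t_{i,n} = λ_i/(1+nλ_iκ_i²)², where s_{i,n} = λ_i/(1+nλ_iκ_i²) and t_{i,n} = nλ_i²κ_i²/(1+nλ_iκ_i²)², satisfies Σ_i (s_{i,n} − t_{i,n}) ≍ τ_n²(nτ_n²)^{-2α/(1+2α+2p)}, while Σ_i s_{i,n}² ≍ Σ_i t_{i,n}² ≍ τ_n⁴(nτ_n²)^{-(1+4α)/(1+2α+2p)}; consequently the standard deviations of U_n = Σ_i s_{i,n} Z_i² and V_n = Σ_i t_{i,n} Z_i² (Z_i iid standard normal) are of strictly smaller order than E(U_n − V_n). -/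
open Filter Topology

-- auxiliary lemmas

lemma summable_aux {r : ℝ} (hr : 1 < r) : Summable (fun i : ℕ => ((i : ℝ) + 1) ^ (-r)) := by
  have h : Summable (fun i : ℕ => ((i : ℝ)) ^ (-r)) := by
    rw [Real.summable_nat_rpow]; linarith
  have := (summable_nat_add_iff 1).mpr h
  simpa [Nat.cast_add] using this

-- MVT step
lemma step_aux {r : ℝ} (hr : 1 < r) {a : ℝ} (ha : 0 < a) :
    (a + 1) ^ (-r) ≤ (a ^ (1 - r) - (a + 1) ^ (1 - r)) / (r - 1) ∧
    (a ^ (1 - r) - (a + 1) ^ (1 - r)) / (r - 1) ≤ a ^ (-r) := by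
  have h1 : ∀ x ∈ Set.Ioo a (a+1), HasDerivAt (fun x : ℝ => x ^ (1 - r)) ((1-r) * x ^ (1-r-1)) x := by
    intro x hx
    exact Real.hasDerivAt_rpow_const (Or.inl (by nlinarith [hx.1]))
  have hcont : ContinuousOn (fun x : ℝ => x ^ (1 - r)) (Set.Icc a (a+1)) := by
    apply ContinuousOn.rpow_const continuousOn_id
    intro x hx; left; exact ne_of_gt (lt_of_lt_of_le ha hx.1)
  obtain ⟨c, hc, hceq⟩ := exists_hasDerivAt_eq_slope (fun x : ℝ => x ^ (1 - r))
    (fun x => (1-r) * x ^ (1-r-1)) (by linarith) hcont h1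
  have hkey : a ^ (1-r) - (a+1) ^ (1-r) = (r - 1) * c ^ (-r) := by
    have h2 : a + 1 - a = 1 := by ring
    rw [h2, div_one] at hceq
    have h3 : (1 : ℝ) - r - 1 = -r := by ring
    rw [h3] at hceq
    nlinarith [hceq]
  rw [hkey]
  have hc1 : 0 < c := lt_trans ha hc.1
  have hr1 : 0 < r - 1 := by linarith
  rw [mul_comm, mul_div_assoc, div_self (ne_of_gt hr1), mul_one]
  constructor
  · exact Real.rpow_le_rpow_of_nonpos hc1 (le_of_lt hc.2) (by linarith)
  · exact Real.rpow_le_rpow_of_nonpos ha (le_of_lt hc.1) (by linarith)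

lemma tel_aux {r : ℝ} (hr : 1 < r) {M : ℕ} (hM : 1 ≤ M) :
    HasSum (fun k : ℕ => (((M : ℝ) + k) ^ (1-r) / (r-1) - ((M : ℝ) + k + 1) ^ (1-r) / (r-1)))
      ((M : ℝ) ^ (1-r) / (r-1)) := by
  set f : ℕ → ℝ := fun k => ((M : ℝ) + k) ^ (1-r) / (r-1) with hf
  have hMpos : (0:ℝ) < M := by exact_mod_cast hM
  have hr1 : (0:ℝ) < r - 1 := by linarith
  have hnonneg : ∀ k, 0 ≤ f k - f (k+1) := by
    intro k
    have h1 : (0:ℝ) < (M:ℝ) + k := by positivity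
    have h2 : ((M:ℝ) + ((k:ℝ)+1)) ^ (1-r) ≤ ((M:ℝ) + k) ^ (1-r) :=
      Real.rpow_le_rpow_of_nonpos h1 (by linarith) (by linarith)
    simp only [hf]
    push_cast
    rw [div_sub_div_same]
    apply div_nonneg (by linarith) (by linarith)
  have hpart : ∀ n, ∑ i ∈ Finset.range n, (f i - f (i+1)) = f 0 - f n :=
    fun n => Finset.sum_range_sub' f n
  have hf0 : f 0 = (M : ℝ) ^ (1-r) / (r-1) := by simp [hf]
  have hflim : Tendsto f atTop (𝓝 0) := by
    have h1 : Tendsto (fun k : ℕ => (M:ℝ) + k) atTop atTop :=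
      tendsto_atTop_add_const_left _ _ tendsto_natCast_atTop_atTop
    have h2 := (tendsto_rpow_neg_atTop hr1).comp h1
    have h3 : (1 - r) = -(r-1) := by ring
    have h4 : Tendsto (fun k : ℕ => ((M:ℝ) + k) ^ (1-r)) atTop (𝓝 0) := by
      rw [h3]; exact h2
    have := h4.div_const (r-1)
    simpa [hf] using this
  have hsum : Summable (fun k => f k - f (k+1)) := by
    apply summable_of_sum_range_le hnonneg
    intro n
    rw [hpart]
    have h5 : 0 ≤ f n := by
      simp only [hf]
      apply div_nonneg (Real.rpow_nonneg (by positivity) _) (by linarith)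
    linarith
  have htend : Tendsto (fun n => ∑ i ∈ Finset.range n, (f i - f (i+1))) atTop
      (𝓝 (f 0)) := by
    simp only [hpart]
    have := hflim.const_sub (f 0)
    simpa using this
  have hhs := hsum.hasSum
  have h5 := hhs.tendsto_sum_nat
  have h6 : ∑' k, (f k - f (k+1)) = f 0 := tendsto_nhds_unique h5 htend
  have h7 : (fun k : ℕ => f k - f (k+1)) =
      (fun k : ℕ => ((M : ℝ) + k) ^ (1-r) / (r-1) - ((M : ℝ) + k + 1) ^ (1-r) / (r-1)) := by
    funext k; simp only [hf]; push_cast; ring_nf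
  rw [← hf0, ← h6, ← h7]
  exact hhs

lemma summable_tail {r : ℝ} (hr : 1 < r) {M : ℕ} (hM : 1 ≤ M) :
    Summable (fun k : ℕ => ((M : ℝ) + k) ^ (-r)) := by
  have hMpos : (1:ℝ) ≤ M := by exact_mod_cast hM
  apply Summable.of_nonneg_of_le (fun k => by positivity) _ (summable_aux hr)
  intro k
  exact Real.rpow_le_rpow_of_nonpos (by positivity) (by linarith) (by linarith)

lemma le_tail {r : ℝ} (hr : 1 < r) {M : ℕ} (hM : 1 ≤ M) :
    (M : ℝ) ^ (1-r) / (r-1) ≤ ∑' k : ℕ, ((M : ℝ) + k) ^ (-r) := by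
  have hMpos : (0:ℝ) < M := by exact_mod_cast hM
  have htel := tel_aux hr hM
  rw [← htel.tsum_eq]
  apply Summable.tsum_le_tsum _ htel.summable (summable_tail hr hM)
  intro k
  have h1 : (0:ℝ) < (M:ℝ) + k := by positivity
  have hstep := (step_aux hr h1).2
  rw [div_sub_div_same]
  exact hstep

lemma tail_le {r : ℝ} (hr : 1 < r) {M : ℕ} (hM : 1 ≤ M) :
    ∑' k : ℕ, ((M : ℝ) + k) ^ (-r) ≤ (r/(r-1)) * (M : ℝ) ^ (1-r) := by
  have hMpos : (0:ℝ) < M := by exact_mod_cast hM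
  have htel := tel_aux hr hM
  have hsummable := summable_tail hr hM
  rw [Summable.tsum_eq_zero_add hsummable]
  simp only [Nat.cast_zero, add_zero]
  have hs1 : Summable (fun k : ℕ => ((M : ℝ) + ((k:ℕ) + 1 : ℕ)) ^ (-r)) := by
    apply Summable.of_nonneg_of_le (fun k => by positivity) _ (summable_aux hr)
    intro k
    apply Real.rpow_le_rpow_of_nonpos (by positivity) (by push_cast; linarith) (by linarith)
  have h2 : ∑' k : ℕ, ((M : ℝ) + ((k:ℕ) + 1 : ℕ)) ^ (-r) ≤ (M:ℝ)^(1-r)/(r-1) := by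
    rw [← htel.tsum_eq]
    apply Summable.tsum_le_tsum _ hs1 htel.summable
    intro k
    have h1 : (0:ℝ) < (M:ℝ) + k := by positivity
    have hstep := (step_aux hr h1).1
    push_cast
    rw [show (M:ℝ) + ((k:ℝ)+1) = ((M:ℝ)+(k:ℝ))+1 from by ring, div_sub_div_same]
    exact hstep
  have h3 : ((M:ℝ)) ^ (-r) ≤ (M:ℝ)^(1-r) :=
    Real.rpow_le_rpow_of_exponent_le (by exact_mod_cast hM) (by linarith)
  have hne : r - 1 ≠ 0 := by linarith
  have h4 : (r/(r-1)) * (M : ℝ) ^ (1-r) = (M:ℝ)^(1-r) + (M : ℝ) ^ (1-r) / (r-1) := by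
    field_simp; ring
  rw [h4]
  linarith

lemma rpow_exp_div {m e β : ℝ} (hm : 0 < m) (hβ : β ≠ 0) :
    (m ^ (1/β)) ^ e = m ^ (e/β) := by
  rw [← Real.rpow_mul (le_of_lt hm)]
  congr 1
  field_simp

lemma core_summable {r β m : ℝ} (hr : 1 < r) (hm : 0 ≤ m) :
    Summable (fun i : ℕ => ((i:ℝ)+1) ^ (-r) / (1 + m * ((i:ℝ)+1) ^ (-β))^2) := by
  apply Summable.of_nonneg_of_le _ _ (summable_aux hr)
  · intro i; positivity
  · intro i
    apply div_le_self (by positivity)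
    nlinarith [mul_nonneg hm (Real.rpow_nonneg (by positivity : (0:ℝ) ≤ (i:ℝ)+1) (-β))]

set_option maxHeartbeats 1000000 in
lemma core_upper {r β m : ℝ} (hr : 1 < r) (hβ : 1 < β) (hrβ : r ≤ 2*β) (hm : 1 ≤ m) :
    ∑' i : ℕ, ((i:ℝ)+1) ^ (-r) / (1 + m * ((i:ℝ)+1) ^ (-β))^2 ≤
      ((2:ℝ) ^ (2*β - r + 1) + r/(r-1)) * m ^ ((1-r)/β) := by
  have hm0 : (0:ℝ) < m := by linarith
  have hβ0 : β ≠ 0 := by linarith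
  set F : ℕ → ℝ := fun i => ((i:ℝ)+1) ^ (-r) / (1 + m * ((i:ℝ)+1) ^ (-β))^2 with hF
  have hsumF : Summable F := core_summable hr (le_of_lt hm0)
  set M : ℕ := ⌈m ^ (1/β)⌉₊ with hMdef
  have hmβ1 : (1:ℝ) ≤ m ^ (1/β) := Real.one_le_rpow hm (by positivity)
  have hM1 : 1 ≤ M := by
    rw [hMdef]; exact Nat.one_le_ceil_iff.mpr (by linarith)
  have hMge : m ^ (1/β) ≤ (M:ℝ) := Nat.le_ceil _
  have hMle : (M:ℝ) ≤ 2 * m ^ (1/β) := by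
    have := Nat.ceil_lt_add_one (by positivity : (0:ℝ) ≤ m ^ (1/β))
    rw [hMdef]
    push_cast
    linarith
  rw [← Summable.sum_add_tsum_nat_add M hsumF]
  have hhead : ∑ i ∈ Finset.range M, F i ≤ (2:ℝ) ^ (2*β - r + 1) * m ^ ((1-r)/β) := by
    have hterm : ∀ i ∈ Finset.range M, F i ≤ m^(-(2:ℝ)) * (M:ℝ)^(2*β - r) := by
      intro i hi
      have hk : (0:ℝ) < (i:ℝ)+1 := by positivity
      have hkM : (i:ℝ)+1 ≤ (M:ℝ) := by
        have : i + 1 ≤ M := Finset.mem_range.mp hi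
        exact_mod_cast this
      have hd0 : (0:ℝ) < m * ((i:ℝ)+1) ^ (-β) := by positivity
      have h1 : F i ≤ ((i:ℝ)+1) ^ (-r) / (m * ((i:ℝ)+1) ^ (-β))^2 := by
        apply div_le_div_of_nonneg_left (Real.rpow_nonneg (le_of_lt hk) _) (by positivity)
        nlinarith
      have h2 : ((i:ℝ)+1) ^ (-r) / (m * ((i:ℝ)+1) ^ (-β))^2
          = m^(-(2:ℝ)) * ((i:ℝ)+1)^(2*β - r) := by
        rw [mul_pow, ← Real.rpow_natCast (((i:ℝ)+1) ^ (-β)) 2, ← Real.rpow_mul (le_of_lt hk),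
          ← Real.rpow_natCast m 2]
        push_cast
        rw [div_eq_mul_inv, mul_inv, ← Real.rpow_neg (le_of_lt hm0),
          ← Real.rpow_neg (le_of_lt hk), mul_left_comm, ← Real.rpow_add hk]
        congr 1
        congr 1
        ring
      have h3 : ((i:ℝ)+1)^(2*β - r) ≤ (M:ℝ)^(2*β - r) :=
        Real.rpow_le_rpow (le_of_lt hk) hkM (by linarith)
      rw [h2] at h1
      calc F i ≤ m^(-(2:ℝ)) * ((i:ℝ)+1)^(2*β - r) := h1
        _ ≤ m^(-(2:ℝ)) * (M:ℝ)^(2*β - r) := by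
            apply mul_le_mul_of_nonneg_left h3 (Real.rpow_nonneg (le_of_lt hm0) _)
    calc ∑ i ∈ Finset.range M, F i ≤ M * (m^(-(2:ℝ)) * (M:ℝ)^(2*β - r)) := by
          have := Finset.sum_le_card_nsmul (Finset.range M) F _ hterm
          rw [Finset.card_range] at this
          simpa [nsmul_eq_mul] using this
      _ = m^(-(2:ℝ)) * (M:ℝ)^(2*β - r + 1) := by
          rw [Real.rpow_add (by exact_mod_cast Nat.lt_of_lt_of_le Nat.zero_lt_one hM1 : (0:ℝ) < M),
            Real.rpow_one]
          ring
      _ ≤ m^(-(2:ℝ)) * (2 * m ^ (1/β))^(2*β - r + 1) := by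
          apply mul_le_mul_of_nonneg_left _ (Real.rpow_nonneg (le_of_lt hm0) _)
          exact Real.rpow_le_rpow (by positivity) hMle (by linarith)
      _ = (2:ℝ) ^ (2*β - r + 1) * m ^ ((1-r)/β) := by
          rw [Real.mul_rpow (by norm_num) (by positivity), rpow_exp_div hm0 hβ0]
          rw [show m^(-(2:ℝ)) * ((2:ℝ) ^ (2*β - r + 1) * m ^ ((2*β - r + 1)/β))
              = (2:ℝ) ^ (2*β - r + 1) * (m^(-(2:ℝ)) * m ^ ((2*β - r + 1)/β)) from by ring,
            ← Real.rpow_add hm0]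
          congr 1
          congr 1
          field_simp
          ring
  have htail : ∑' i : ℕ, F (i + M) ≤ (r/(r-1)) * m ^ ((1-r)/β) := by
    have hs1 : Summable (fun i : ℕ => (((M+1:ℕ):ℝ) + i) ^ (-r)) := summable_tail hr (by omega)
    have hle : ∀ i : ℕ, F (i + M) ≤ (((M+1:ℕ):ℝ) + i) ^ (-r) := by
      intro i
      have heq : ((i + M :ℕ):ℝ) + 1 = ((M+1:ℕ):ℝ) + i := by push_cast; ring
      simp only [hF, heq]
      apply div_le_self (Real.rpow_nonneg (by positivity) _)
      nlinarith [mul_nonneg (le_of_lt hm0)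
        (Real.rpow_nonneg (by positivity : (0:ℝ) ≤ ((M+1:ℕ):ℝ) + (i:ℝ)) (-β))]
    have hsF' : Summable (fun i : ℕ => F (i + M)) := by
      apply Summable.of_nonneg_of_le _ hle hs1
      intro i
      simp only [hF]
      positivity
    have h1 : ∑' i : ℕ, F (i + M) ≤ ∑' i : ℕ, (((M+1:ℕ):ℝ) + i) ^ (-r) :=
      Summable.tsum_le_tsum hle hsF' hs1
    have h2 := tail_le hr (by omega : 1 ≤ M + 1)
    have h3 : ((M+1:ℕ):ℝ) ^ (1-r) ≤ m ^ ((1-r)/β) := by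
      rw [← rpow_exp_div hm0 hβ0]
      apply Real.rpow_le_rpow_of_nonpos (by positivity) _ (by linarith)
      push_cast
      linarith
    calc ∑' i : ℕ, F (i + M) ≤ ∑' i : ℕ, (((M+1:ℕ):ℝ) + i) ^ (-r) := h1
      _ ≤ (r/(r-1)) * ((M+1:ℕ):ℝ) ^ (1-r) := h2
      _ ≤ (r/(r-1)) * m ^ ((1-r)/β) := by
          apply mul_le_mul_of_nonneg_left h3
          apply div_nonneg (by linarith) (by linarith)
  calc ∑ i ∈ Finset.range M, F i + ∑' i : ℕ, F (i + M)
      ≤ (2:ℝ) ^ (2*β - r + 1) * m ^ ((1-r)/β) + (r/(r-1)) * m ^ ((1-r)/β) := by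
        exact add_le_add hhead htail
    _ = ((2:ℝ) ^ (2*β - r + 1) + r/(r-1)) * m ^ ((1-r)/β) := by ring

set_option maxHeartbeats 1000000 in
lemma core_lower {r β m : ℝ} (hr : 1 < r) (hβ : 1 < β) (hm : 1 ≤ m) :
    ((3:ℝ) ^ (1-r) / (4*(r-1))) * m ^ ((1-r)/β) ≤
      ∑' i : ℕ, ((i:ℝ)+1) ^ (-r) / (1 + m * ((i:ℝ)+1) ^ (-β))^2 := by
  have hm0 : (0:ℝ) < m := by linarith
  have hβ0 : β ≠ 0 := by linarith
  set F : ℕ → ℝ := fun i => ((i:ℝ)+1) ^ (-r) / (1 + m * ((i:ℝ)+1) ^ (-β))^2 with hF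
  have hsumF : Summable F := core_summable hr (le_of_lt hm0)
  set M : ℕ := ⌈m ^ (1/β)⌉₊ with hMdef
  have hmβ1 : (1:ℝ) ≤ m ^ (1/β) := Real.one_le_rpow hm (by positivity)
  have hM1 : 1 ≤ M := by
    rw [hMdef]; exact Nat.one_le_ceil_iff.mpr (by linarith)
  have hMge : m ^ (1/β) ≤ (M:ℝ) := Nat.le_ceil _
  have hMle : (M:ℝ) ≤ 2 * m ^ (1/β) := by
    have := Nat.ceil_lt_add_one (by positivity : (0:ℝ) ≤ m ^ (1/β))
    rw [hMdef]; push_cast; linarith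
  have hs1 : Summable (fun i : ℕ => (((M+1:ℕ):ℝ) + i) ^ (-r)) := summable_tail hr (by omega)
  have hle : ∀ i : ℕ, (((M+1:ℕ):ℝ) + i) ^ (-r) / 4 ≤ F (i + M) := by
    intro i
    have heq : ((i + M :ℕ):ℝ) + 1 = ((M+1:ℕ):ℝ) + i := by push_cast; ring
    simp only [hF, heq]
    have hk0 : (0:ℝ) < ((M+1:ℕ):ℝ) + i := by positivity
    have hklarge : m ^ (1/β) ≤ ((M+1:ℕ):ℝ) + i := by
      push_cast; linarith [Nat.cast_nonneg (α := ℝ) i]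
    have hsmall : m * (((M+1:ℕ):ℝ) + i) ^ (-β) ≤ 1 := by
      have h1 : (((M+1:ℕ):ℝ) + i) ^ (-β) ≤ (m ^ (1/β)) ^ (-β) :=
        Real.rpow_le_rpow_of_nonpos (by positivity) hklarge (by linarith)
      have h2 : (m ^ (1/β)) ^ (-β) = m⁻¹ := by
        rw [rpow_exp_div hm0 hβ0, show (-β)/β = -(1:ℝ) from by field_simp, Real.rpow_neg_one]
      rw [h2] at h1
      calc m * (((M+1:ℕ):ℝ) + i) ^ (-β) ≤ m * m⁻¹ :=
            mul_le_mul_of_nonneg_left h1 (le_of_lt hm0)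
        _ = 1 := mul_inv_cancel₀ (ne_of_gt hm0)
    have hdle : (1 + m * (((M+1:ℕ):ℝ) + i) ^ (-β))^2 ≤ 4 := by
      have h0 : 0 ≤ m * (((M+1:ℕ):ℝ) + i) ^ (-β) := by positivity
      nlinarith
    rw [div_le_div_iff₀ (by norm_num) (by positivity)]
    exact mul_le_mul_of_nonneg_left hdle (Real.rpow_nonneg (le_of_lt hk0) _)
  have hub : ∀ i : ℕ, F (i + M) ≤ (((M+1:ℕ):ℝ) + i) ^ (-r) := by
    intro i
    have heq : ((i + M :ℕ):ℝ) + 1 = ((M+1:ℕ):ℝ) + i := by push_cast; ring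
    simp only [hF, heq]
    apply div_le_self (Real.rpow_nonneg (by positivity) _)
    nlinarith [mul_nonneg (le_of_lt hm0)
      (Real.rpow_nonneg (by positivity : (0:ℝ) ≤ ((M+1:ℕ):ℝ) + (i:ℝ)) (-β))]
  have hsF' : Summable (fun i : ℕ => F (i + M)) := by
    apply Summable.of_nonneg_of_le _ hub hs1
    intro i
    simp only [hF]
    positivity
  have hdrop : ∑' i : ℕ, F (i + M) ≤ ∑' i : ℕ, F i := by
    rw [← Summable.sum_add_tsum_nat_add M hsumF]
    have h0 : 0 ≤ ∑ i ∈ Finset.range M, F i := by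
      apply Finset.sum_nonneg
      intro i _
      simp only [hF]
      positivity
    linarith
  have h4 : ∑' i : ℕ, (((M+1:ℕ):ℝ) + i) ^ (-r) / 4 ≤ ∑' i : ℕ, F (i + M) :=
    Summable.tsum_le_tsum hle (hs1.div_const 4) hsF'
  have h5 : ((M+1:ℕ):ℝ) ^ (1-r) / (r-1) / 4 ≤ ∑' i : ℕ, (((M+1:ℕ):ℝ) + i) ^ (-r) / 4 := by
    rw [tsum_div_const]
    exact (div_le_div_iff_of_pos_right (by norm_num)).mpr (le_tail hr (by omega))
  have h6 : ((3:ℝ) ^ (1-r) / (4*(r-1))) * m ^ ((1-r)/β) ≤ ((M+1:ℕ):ℝ) ^ (1-r) / (r-1) / 4 := by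
    have hub3 : ((M+1:ℕ):ℝ) ≤ 3 * m ^ (1/β) := by push_cast; linarith
    have h7 : (3 * m ^ (1/β)) ^ (1-r) ≤ ((M+1:ℕ):ℝ) ^ (1-r) :=
      Real.rpow_le_rpow_of_nonpos (by positivity) hub3 (by linarith)
    have h8 : (3 * m ^ (1/β)) ^ (1-r) = (3:ℝ) ^ (1-r) * m ^ ((1-r)/β) := by
      rw [Real.mul_rpow (by norm_num) (by positivity), rpow_exp_div hm0 hβ0]
    have h9 : (0:ℝ) < r - 1 := by linarith
    rw [div_div, div_mul_eq_mul_div,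
      div_le_div_iff₀ (by linarith : (0:ℝ) < 4*(r-1)) (by linarith : (0:ℝ) < (r-1)*4)]
    nlinarith [h7, h8, h9, Real.rpow_nonneg (le_of_lt hm0) ((1-r)/β),
      Real.rpow_nonneg (by norm_num : (0:ℝ) ≤ 3) (1-r)]
  linarith

set_option maxHeartbeats 1000000 in
lemma window_lower {β r m₁ m₂ : ℝ} (hβ : 1 < β) (hr : 1 < r) (hm₁ : 0 < m₁)
    (hm₁₂ : m₁ ≤ m₂) (hm₂ : 1 ≤ m₂) (d G : ℕ → ℝ)
    (hd1 : ∀ i : ℕ, m₁ * ((i:ℝ)+1) ^ (-β) ≤ d i)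
    (hd2 : ∀ i : ℕ, d i ≤ m₂ * ((i:ℝ)+1) ^ (-β))
    (hG : ∀ i : ℕ, G i = ((i:ℝ)+1) ^ (-r) * (d i / (1 + d i)^2)^2) :
    (5:ℝ)^(-r) * ((m₁/m₂) * (5:ℝ)^(-β) / 4)^2 * m₂ ^ ((1-r)/β) ≤ ∑' i : ℕ, G i := by
  have hm₂0 : (0:ℝ) < m₂ := by linarith
  have hβ0 : β ≠ 0 := by linarith
  have hd0 : ∀ i : ℕ, 0 < d i := by
    intro i
    calc (0:ℝ) < m₁ * ((i:ℝ)+1) ^ (-β) := by positivity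
      _ ≤ d i := hd1 i
  have hG0 : ∀ i : ℕ, 0 ≤ G i := by
    intro i
    rw [hG i]
    positivity
  have hGle : ∀ i : ℕ, G i ≤ ((i:ℝ)+1) ^ (-r) := by
    intro i
    rw [hG i]
    have h1 : d i / (1 + d i)^2 ≤ 1 := by
      rw [div_le_one (by nlinarith [hd0 i])]
      nlinarith [hd0 i]
    have h2 : (d i / (1 + d i)^2)^2 ≤ 1 := by
      have h0 : 0 ≤ d i / (1 + d i)^2 := div_nonneg (le_of_lt (hd0 i)) (sq_nonneg _)
      nlinarith
    nlinarith [Real.rpow_nonneg (by positivity : (0:ℝ) ≤ (i:ℝ)+1) (-r)]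
  have hsumG : Summable G :=
    Summable.of_nonneg_of_le hG0 hGle (summable_aux hr)
  set M : ℕ := ⌈m₂ ^ (1/β)⌉₊ with hMdef
  have hmβ1 : (1:ℝ) ≤ m₂ ^ (1/β) := Real.one_le_rpow hm₂ (by positivity)
  have hMge : m₂ ^ (1/β) ≤ (M:ℝ) := Nat.le_ceil _
  have hMle : (M:ℝ) ≤ 2 * m₂ ^ (1/β) := by
    have := Nat.ceil_lt_add_one (by positivity : (0:ℝ) ≤ m₂ ^ (1/β))
    rw [hMdef]; push_cast; linarith
  set δ : ℝ := (m₁/m₂) * (5:ℝ)^(-β) with hδdef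
  have hδ0 : 0 < δ := by positivity
  -- per-term lower bound on the window
  have hterm : ∀ i ∈ Finset.Icc M (2*M),
      (5:ℝ)^(-r) * m₂ ^ (-r/β) * (δ/4)^2 ≤ G i := by
    intro i hi
    obtain ⟨hi1, hi2⟩ := Finset.mem_Icc.mp hi
    have hk0 : (0:ℝ) < (i:ℝ)+1 := by positivity
    have hklo : m₂ ^ (1/β) ≤ (i:ℝ)+1 := by
      have : (M:ℝ) ≤ (i:ℝ) := by exact_mod_cast hi1
      linarith
    have hkhi : (i:ℝ)+1 ≤ 5 * m₂ ^ (1/β) := by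
      have : (i:ℝ) ≤ 2*(M:ℝ) := by exact_mod_cast hi2
      linarith
    -- d i ≤ 1
    have hd_le1 : d i ≤ 1 := by
      have h1 : ((i:ℝ)+1) ^ (-β) ≤ (m₂ ^ (1/β)) ^ (-β) :=
        Real.rpow_le_rpow_of_nonpos (by positivity) hklo (by linarith)
      have h2 : (m₂ ^ (1/β)) ^ (-β) = m₂⁻¹ := by
        rw [rpow_exp_div hm₂0 hβ0, show (-β)/β = -(1:ℝ) from by field_simp, Real.rpow_neg_one]
      calc d i ≤ m₂ * ((i:ℝ)+1) ^ (-β) := hd2 i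
        _ ≤ m₂ * m₂⁻¹ := by
            rw [h2] at h1
            exact mul_le_mul_of_nonneg_left h1 (le_of_lt hm₂0)
        _ = 1 := mul_inv_cancel₀ (ne_of_gt hm₂0)
    -- d i ≥ δ
    have hd_ge : δ ≤ d i := by
      have h1 : (5 * m₂ ^ (1/β)) ^ (-β) ≤ ((i:ℝ)+1) ^ (-β) :=
        Real.rpow_le_rpow_of_nonpos hk0 hkhi (by linarith)
      have h2 : (5 * m₂ ^ (1/β)) ^ (-β) = (5:ℝ)^(-β) * m₂⁻¹ := by
        rw [Real.mul_rpow (by norm_num) (by positivity), rpow_exp_div hm₂0 hβ0,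
          show (-β)/β = -(1:ℝ) from by field_simp, Real.rpow_neg_one]
      have h3 : m₁ * ((5:ℝ)^(-β) * m₂⁻¹) ≤ m₁ * ((i:ℝ)+1) ^ (-β) := by
        rw [← h2]
        exact mul_le_mul_of_nonneg_left h1 (le_of_lt hm₁)
      calc δ = m₁ * ((5:ℝ)^(-β) * m₂⁻¹) := by rw [hδdef]; field_simp
        _ ≤ m₁ * ((i:ℝ)+1) ^ (-β) := h3
        _ ≤ d i := hd1 i
    -- ratio lower bound
    have hratio : δ/4 ≤ d i / (1 + d i)^2 := by
      have h4 : (1 + d i)^2 ≤ 4 := by nlinarith [hd0 i]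
      have h5 : (0:ℝ) < (1 + d i)^2 := by nlinarith [hd0 i]
      rw [div_le_div_iff₀ (by norm_num) h5]
      nlinarith [hd0 i]
    have hsq : (δ/4)^2 ≤ (d i / (1 + d i)^2)^2 := by
      have : (0:ℝ) ≤ δ/4 := by positivity
      nlinarith
    have hkpow : (5:ℝ)^(-r) * m₂ ^ (-r/β) ≤ ((i:ℝ)+1) ^ (-r) := by
      have h1 : (5 * m₂ ^ (1/β)) ^ (-r) ≤ ((i:ℝ)+1) ^ (-r) :=
        Real.rpow_le_rpow_of_nonpos hk0 hkhi (by linarith)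
      have h2 : (5 * m₂ ^ (1/β)) ^ (-r) = (5:ℝ)^(-r) * m₂ ^ (-r/β) := by
        rw [Real.mul_rpow (by norm_num) (by positivity), rpow_exp_div hm₂0 hβ0]
      rw [← h2]
      exact h1
    rw [hG i]
    calc (5:ℝ)^(-r) * m₂ ^ (-r/β) * (δ/4)^2
        ≤ ((i:ℝ)+1) ^ (-r) * (δ/4)^2 := by
          apply mul_le_mul_of_nonneg_right hkpow (by positivity)
      _ ≤ ((i:ℝ)+1) ^ (-r) * (d i / (1 + d i)^2)^2 := by
          apply mul_le_mul_of_nonneg_left hsq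
            (Real.rpow_nonneg (le_of_lt hk0) _)
  -- sum over the window
  have hcard : (Finset.Icc M (2*M)).card = M + 1 := by
    rw [Nat.card_Icc]
    omega
  have hsum_window : ((M:ℝ)+1) * ((5:ℝ)^(-r) * m₂ ^ (-r/β) * (δ/4)^2)
      ≤ ∑ i ∈ Finset.Icc M (2*M), G i := by
    have := Finset.card_nsmul_le_sum (Finset.Icc M (2*M)) G _ hterm
    rw [hcard] at this
    have h6 : ((M+1 : ℕ):ℝ) = (M:ℝ)+1 := by push_cast; ring
    simpa [nsmul_eq_mul, h6] using this
  have hwin_le : ∑ i ∈ Finset.Icc M (2*M), G i ≤ ∑' i : ℕ, G i :=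
    Summable.sum_le_tsum _ (fun i _ => hG0 i) hsumG
  have hfinal : (5:ℝ)^(-r) * (δ/4)^2 * m₂ ^ ((1-r)/β)
      ≤ ((M:ℝ)+1) * ((5:ℝ)^(-r) * m₂ ^ (-r/β) * (δ/4)^2) := by
    have h7 : m₂ ^ ((1-r)/β) = m₂ ^ (1/β) * m₂ ^ (-r/β) := by
      rw [← Real.rpow_add hm₂0]
      congr 1
      ring
    rw [h7]
    have h8 : m₂ ^ (1/β) ≤ (M:ℝ)+1 := by linarith
    have h9 : (0:ℝ) ≤ (5:ℝ)^(-r) * (δ/4)^2 := by positivity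
    nlinarith [Real.rpow_nonneg (le_of_lt hm₂0) (-r/β),
      mul_le_mul_of_nonneg_right h8 (Real.rpow_nonneg (le_of_lt hm₂0) (-r/β)),
      Real.rpow_nonneg (by norm_num : (0:ℝ) ≤ 5) (-r)]
  calc (5:ℝ)^(-r) * ((m₁/m₂) * (5:ℝ)^(-β) / 4)^2 * m₂ ^ ((1-r)/β)
      = (5:ℝ)^(-r) * (δ/4)^2 * m₂ ^ ((1-r)/β) := by rw [hδdef]
    _ ≤ ((M:ℝ)+1) * ((5:ℝ)^(-r) * m₂ ^ (-r/β) * (δ/4)^2) := hfinal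
    _ ≤ ∑ i ∈ Finset.Icc M (2*M), G i := hsum_window
    _ ≤ ∑' i : ℕ, G i := hwin_le

noncomputable def cUP (r β c : ℝ) : ℝ := ((2:ℝ)^(2*β-r+1) + r/(r-1)) * (c^2)^((1-r)/β)
noncomputable def cLO (r β c : ℝ) : ℝ := ((3:ℝ)^(1-r)/(4*(r-1))) * (c^2)^((1-r)/β)
noncomputable def cWIN (r β c₁ c₂ : ℝ) : ℝ :=
  (5:ℝ)^(-r) * ((c₁^2/c₂^2) * (5:ℝ)^(-β)/4)^2 * (c₂^2)^((1-r)/β)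

lemma cLO_pos {r β c : ℝ} (hr : 1 < r) (hc : 0 < c) : 0 < cLO r β c := by
  unfold cLO
  apply mul_pos
  · apply div_pos (Real.rpow_pos_of_pos (by norm_num) _) (by linarith)
  · exact Real.rpow_pos_of_pos (by positivity) _

lemma cWIN_pos {r β c₁ c₂ : ℝ} (hc₁ : 0 < c₁) (hc₂ : 0 < c₂) : 0 < cWIN r β c₁ c₂ := by
  unfold cWIN
  positivity

set_option maxHeartbeats 1000000 in
lemma sandwich_core {β r m₁ m₂ : ℝ} (hr : 1 < r) (hβ : 1 < β) (hrβ : r ≤ 2*β)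
    (hm₁ : 1 ≤ m₁) (hm₁₂ : m₁ ≤ m₂) (d : ℕ → ℝ)
    (hd1 : ∀ i : ℕ, m₁ * ((i:ℝ)+1)^(-β) ≤ d i)
    (hd2 : ∀ i : ℕ, d i ≤ m₂ * ((i:ℝ)+1)^(-β)) :
    ((3:ℝ)^(1-r)/(4*(r-1))) * m₂ ^ ((1-r)/β) ≤ (∑' i : ℕ, ((i:ℝ)+1)^(-r)/(1+d i)^2) ∧
    (∑' i : ℕ, ((i:ℝ)+1)^(-r)/(1+d i)^2) ≤ ((2:ℝ)^(2*β-r+1) + r/(r-1)) * m₁ ^ ((1-r)/β) := by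
  have hm₂ : 1 ≤ m₂ := le_trans hm₁ hm₁₂
  have hm₁0 : (0:ℝ) < m₁ := by linarith
  have hd0 : ∀ i : ℕ, 0 < d i := fun i =>
    lt_of_lt_of_le (by positivity) (hd1 i)
  have hden : ∀ i : ℕ, (0:ℝ) < (1 + d i)^2 := fun i => by nlinarith [hd0 i]
  have hub : ∀ i : ℕ, ((i:ℝ)+1)^(-r)/(1+d i)^2 ≤
      ((i:ℝ)+1)^(-r) / (1 + m₁ * ((i:ℝ)+1)^(-β))^2 := by
    intro i
    apply div_le_div_of_nonneg_left (Real.rpow_nonneg (by positivity) _) (by positivity)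
    have h1 := hd1 i
    have h2 : (0:ℝ) ≤ m₁ * ((i:ℝ)+1)^(-β) := by positivity
    nlinarith
  have hlb : ∀ i : ℕ, ((i:ℝ)+1)^(-r) / (1 + m₂ * ((i:ℝ)+1)^(-β))^2 ≤
      ((i:ℝ)+1)^(-r)/(1+d i)^2 := by
    intro i
    apply div_le_div_of_nonneg_left (Real.rpow_nonneg (by positivity) _) (hden i)
    have h1 := hd2 i
    have h2 : (0:ℝ) < d i := hd0 i
    nlinarith
  have hsum1 : Summable (fun i : ℕ => ((i:ℝ)+1)^(-r) / (1 + m₁ * ((i:ℝ)+1)^(-β))^2) :=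
    core_summable hr (by linarith)
  have hsum2 : Summable (fun i : ℕ => ((i:ℝ)+1)^(-r) / (1 + m₂ * ((i:ℝ)+1)^(-β))^2) :=
    core_summable hr (by linarith)
  have hsumH : Summable (fun i : ℕ => ((i:ℝ)+1)^(-r)/(1+d i)^2) := by
    apply Summable.of_nonneg_of_le _ hub hsum1
    intro i
    apply div_nonneg (Real.rpow_nonneg (by positivity) _) (le_of_lt (hden i))
  constructor
  · calc ((3:ℝ)^(1-r)/(4*(r-1))) * m₂ ^ ((1-r)/β)
        ≤ ∑' i : ℕ, ((i:ℝ)+1)^(-r) / (1 + m₂ * ((i:ℝ)+1)^(-β))^2 := core_lower hr hβ hm₂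
      _ ≤ ∑' i : ℕ, ((i:ℝ)+1)^(-r)/(1+d i)^2 := Summable.tsum_le_tsum hlb hsum2 hsumH
  · calc (∑' i : ℕ, ((i:ℝ)+1)^(-r)/(1+d i)^2)
        ≤ ∑' i : ℕ, ((i:ℝ)+1)^(-r) / (1 + m₁ * ((i:ℝ)+1)^(-β))^2 :=
          Summable.tsum_le_tsum hub hsumH hsum1
      _ ≤ ((2:ℝ)^(2*β-r+1) + r/(r-1)) * m₁ ^ ((1-r)/β) := core_upper hr hβ hrβ hm₁

set_option maxHeartbeats 1000000 in
lemma Dfacts {p α c₁ c₂ ν t2 : ℝ} (hα : 0 < α) (hc₁ : 0 < c₁)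
    (κ : ℕ → ℝ)
    (hκ : ∀ i : ℕ, c₁ * ((i : ℝ) + 1) ^ (-p) ≤ κ i ∧ κ i ≤ c₂ * ((i : ℝ) + 1) ^ (-p))
    (hν : 0 ≤ ν) (ht2 : 0 < t2) (i : ℕ) :
    c₁^2 * (ν*t2) * ((i:ℝ)+1)^(-(1+2*α+2*p)) ≤ ν * (t2 * ((i:ℝ)+1)^(-1-2*α)) * κ i ^ 2 ∧
    ν * (t2 * ((i:ℝ)+1)^(-1-2*α)) * κ i ^ 2 ≤ c₂^2 * (ν*t2) * ((i:ℝ)+1)^(-(1+2*α+2*p)) := by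
  have hk : (0:ℝ) < (i:ℝ)+1 := by positivity
  obtain ⟨hκ1, hκ2⟩ := hκ i
  have hκ0 : 0 ≤ κ i := le_trans (by positivity) hκ1
  have hpow : (((i:ℝ)+1)^(-p))^2 = ((i:ℝ)+1)^(-(2*p)) := by
    rw [← Real.rpow_natCast (((i:ℝ)+1)^(-p)) 2, ← Real.rpow_mul (le_of_lt hk)]
    congr 1
    push_cast
    ring
  have hsq1 : c₁^2 * ((i:ℝ)+1)^(-(2*p)) ≤ κ i ^ 2 := by
    have := pow_le_pow_left₀ (by positivity : (0:ℝ) ≤ c₁ * ((i:ℝ)+1)^(-p)) hκ1 2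
    rw [mul_pow, hpow] at this
    exact this
  have hsq2 : κ i ^ 2 ≤ c₂^2 * ((i:ℝ)+1)^(-(2*p)) := by
    have := pow_le_pow_left₀ hκ0 hκ2 2
    rw [mul_pow, hpow] at this
    exact this
  have hsplit : ((i:ℝ)+1)^(-(1+2*α+2*p)) = ((i:ℝ)+1)^(-1-2*α) * ((i:ℝ)+1)^(-(2*p)) := by
    rw [← Real.rpow_add hk]
    congr 1
    ring
  have hlam0 : 0 ≤ ν * (t2 * ((i:ℝ)+1)^(-1-2*α)) := by positivity
  constructor
  · calc c₁^2 * (ν*t2) * ((i:ℝ)+1)^(-(1+2*α+2*p))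
        = (ν * (t2 * ((i:ℝ)+1)^(-1-2*α))) * (c₁^2 * ((i:ℝ)+1)^(-(2*p))) := by
          rw [hsplit]; ring
      _ ≤ (ν * (t2 * ((i:ℝ)+1)^(-1-2*α))) * κ i ^ 2 :=
          mul_le_mul_of_nonneg_left hsq1 hlam0
  · calc ν * (t2 * ((i:ℝ)+1)^(-1-2*α)) * κ i ^ 2
        ≤ (ν * (t2 * ((i:ℝ)+1)^(-1-2*α))) * (c₂^2 * ((i:ℝ)+1)^(-(2*p))) :=
          mul_le_mul_of_nonneg_left hsq2 hlam0
      _ = c₂^2 * (ν*t2) * ((i:ℝ)+1)^(-(1+2*α+2*p)) := by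
          rw [hsplit]; ring

set_option maxHeartbeats 1000000 in
lemma masterA {p α c₁ c₂ ν t2 : ℝ} (hp : 0 ≤ p) (hα : 0 < α) (hc₁ : 0 < c₁) (hc₁₂ : c₁ ≤ c₂)
    (κ : ℕ → ℝ)
    (hκ : ∀ i : ℕ, c₁ * ((i : ℝ) + 1) ^ (-p) ≤ κ i ∧ κ i ≤ c₂ * ((i : ℝ) + 1) ^ (-p))
    (hν : 0 ≤ ν) (ht2 : 0 < t2) (hm₁ : 1 ≤ c₁^2 * (ν*t2)) :
    cLO (1+2*α) (1+2*α+2*p) c₂ * (t2 * (ν*t2) ^ (-(2*α/(1+2*α+2*p)))) ≤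
      (∑' i : ℕ, (t2 * ((i:ℝ)+1)^(-1-2*α) / (1 + ν * (t2 * ((i:ℝ)+1)^(-1-2*α)) * κ i ^ 2) -
        ν * (t2 * ((i:ℝ)+1)^(-1-2*α))^2 * κ i ^ 2 /
          (1 + ν * (t2 * ((i:ℝ)+1)^(-1-2*α)) * κ i ^ 2)^2)) ∧
    (∑' i : ℕ, (t2 * ((i:ℝ)+1)^(-1-2*α) / (1 + ν * (t2 * ((i:ℝ)+1)^(-1-2*α)) * κ i ^ 2) -
        ν * (t2 * ((i:ℝ)+1)^(-1-2*α))^2 * κ i ^ 2 /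
          (1 + ν * (t2 * ((i:ℝ)+1)^(-1-2*α)) * κ i ^ 2)^2)) ≤
      cUP (1+2*α) (1+2*α+2*p) c₁ * (t2 * (ν*t2) ^ (-(2*α/(1+2*α+2*p)))) := by
  have hσ : 0 < ν*t2 := by nlinarith [pow_pos hc₁ 2]
  have hm₁₂ : c₁^2 * (ν*t2) ≤ c₂^2 * (ν*t2) := by nlinarith [sq_nonneg c₁, sq_nonneg c₂, mul_self_le_mul_self (le_of_lt hc₁) hc₁₂]
  have hd0 : ∀ i : ℕ, 0 ≤ ν * (t2 * ((i:ℝ)+1)^(-1-2*α)) * κ i ^ 2 := by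
    intro i
    exact mul_nonneg (mul_nonneg hν (by positivity)) (sq_nonneg _)
  have hrepr : ∀ i : ℕ,
      t2 * ((i:ℝ)+1)^(-1-2*α) / (1 + ν * (t2 * ((i:ℝ)+1)^(-1-2*α)) * κ i ^ 2) -
        ν * (t2 * ((i:ℝ)+1)^(-1-2*α))^2 * κ i ^ 2 /
          (1 + ν * (t2 * ((i:ℝ)+1)^(-1-2*α)) * κ i ^ 2)^2
      = t2 * (((i:ℝ)+1)^(-(1+2*α)) / (1 + ν * (t2 * ((i:ℝ)+1)^(-1-2*α)) * κ i ^ 2)^2) := by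
    intro i
    have hexp : ((i:ℝ)+1)^(-(1+2*α)) = ((i:ℝ)+1)^(-1-2*α) := by
      rw [show -(1+2*α) = -1-2*α from by ring]
    rw [hexp]
    have h1 : (0:ℝ) < 1 + ν * (t2 * ((i:ℝ)+1)^(-1-2*α)) * κ i ^ 2 := by
      have := hd0 i; linarith
    field_simp
    ring
  have htsum : (∑' i : ℕ, (t2 * ((i:ℝ)+1)^(-1-2*α) / (1 + ν * (t2 * ((i:ℝ)+1)^(-1-2*α)) * κ i ^ 2) -
        ν * (t2 * ((i:ℝ)+1)^(-1-2*α))^2 * κ i ^ 2 /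
          (1 + ν * (t2 * ((i:ℝ)+1)^(-1-2*α)) * κ i ^ 2)^2))
      = t2 * ∑' i : ℕ, ((i:ℝ)+1)^(-(1+2*α)) /
          (1 + ν * (t2 * ((i:ℝ)+1)^(-1-2*α)) * κ i ^ 2)^2 := by
    rw [tsum_congr hrepr, tsum_mul_left]
  have hsand := sandwich_core (β := 1+2*α+2*p) (r := 1+2*α)
    (by linarith) (by linarith) (by linarith) hm₁ hm₁₂
    (fun i => ν * (t2 * ((i:ℝ)+1)^(-1-2*α)) * κ i ^ 2)
    (fun i => (Dfacts hα hc₁ κ hκ hν ht2 i).1)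
    (fun i => (Dfacts hα hc₁ κ hκ hν ht2 i).2)
  have hexpσ : (ν*t2) ^ (-(2*α/(1+2*α+2*p))) = (ν*t2) ^ ((1-(1+2*α))/(1+2*α+2*p)) := by
    congr 1
    ring
  have hms2 : (c₂^2*(ν*t2)) ^ ((1-(1+2*α))/(1+2*α+2*p))
      = (c₂^2)^((1-(1+2*α))/(1+2*α+2*p)) * (ν*t2)^((1-(1+2*α))/(1+2*α+2*p)) :=
    Real.mul_rpow (sq_nonneg c₂) (le_of_lt hσ)
  have hms1 : (c₁^2*(ν*t2)) ^ ((1-(1+2*α))/(1+2*α+2*p))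
      = (c₁^2)^((1-(1+2*α))/(1+2*α+2*p)) * (ν*t2)^((1-(1+2*α))/(1+2*α+2*p)) :=
    Real.mul_rpow (sq_nonneg c₁) (le_of_lt hσ)
  rw [htsum]
  constructor
  · calc cLO (1+2*α) (1+2*α+2*p) c₂ * (t2 * (ν*t2) ^ (-(2*α/(1+2*α+2*p))))
        = t2 * (((3:ℝ)^(1-(1+2*α))/(4*((1+2*α)-1))) *
            (c₂^2*(ν*t2))^((1-(1+2*α))/(1+2*α+2*p))) := by
          rw [hexpσ, hms2]; unfold cLO; ring
      _ ≤ _ := mul_le_mul_of_nonneg_left hsand.1 (le_of_lt ht2)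
  · calc t2 * (∑' i : ℕ, ((i:ℝ)+1)^(-(1+2*α)) /
          (1 + ν * (t2 * ((i:ℝ)+1)^(-1-2*α)) * κ i ^ 2)^2)
        ≤ t2 * (((2:ℝ)^(2*(1+2*α+2*p)-(1+2*α)+1) + (1+2*α)/((1+2*α)-1)) *
            (c₁^2*(ν*t2))^((1-(1+2*α))/(1+2*α+2*p))) :=
          mul_le_mul_of_nonneg_left hsand.2 (le_of_lt ht2)
      _ = cUP (1+2*α) (1+2*α+2*p) c₁ * (t2 * (ν*t2) ^ (-(2*α/(1+2*α+2*p)))) := by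
          rw [hexpσ, hms1]; unfold cUP; ring

set_option maxHeartbeats 1000000 in
lemma masterB {p α c₁ c₂ ν t2 : ℝ} (hp : 0 ≤ p) (hα : 0 < α) (hc₁ : 0 < c₁) (hc₁₂ : c₁ ≤ c₂)
    (κ : ℕ → ℝ)
    (hκ : ∀ i : ℕ, c₁ * ((i : ℝ) + 1) ^ (-p) ≤ κ i ∧ κ i ≤ c₂ * ((i : ℝ) + 1) ^ (-p))
    (hν : 0 ≤ ν) (ht2 : 0 < t2) (hm₁ : 1 ≤ c₁^2 * (ν*t2)) :
    cLO (2+4*α) (1+2*α+2*p) c₂ * (t2^2 * (ν*t2) ^ (-((1+4*α)/(1+2*α+2*p)))) ≤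
      (∑' i : ℕ, (t2 * ((i:ℝ)+1)^(-1-2*α) / (1 + ν * (t2 * ((i:ℝ)+1)^(-1-2*α)) * κ i ^ 2))^2) ∧
    (∑' i : ℕ, (t2 * ((i:ℝ)+1)^(-1-2*α) / (1 + ν * (t2 * ((i:ℝ)+1)^(-1-2*α)) * κ i ^ 2))^2) ≤
      cUP (2+4*α) (1+2*α+2*p) c₁ * (t2^2 * (ν*t2) ^ (-((1+4*α)/(1+2*α+2*p)))) := by
  have hσ : 0 < ν*t2 := by nlinarith [pow_pos hc₁ 2]
  have hm₁₂ : c₁^2 * (ν*t2) ≤ c₂^2 * (ν*t2) := by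
    nlinarith [sq_nonneg c₁, sq_nonneg c₂, mul_self_le_mul_self (le_of_lt hc₁) hc₁₂]
  have hd0 : ∀ i : ℕ, 0 ≤ ν * (t2 * ((i:ℝ)+1)^(-1-2*α)) * κ i ^ 2 := by
    intro i
    exact mul_nonneg (mul_nonneg hν (by positivity)) (sq_nonneg _)
  have hrepr : ∀ i : ℕ,
      (t2 * ((i:ℝ)+1)^(-1-2*α) / (1 + ν * (t2 * ((i:ℝ)+1)^(-1-2*α)) * κ i ^ 2))^2
      = t2^2 * (((i:ℝ)+1)^(-(2+4*α)) / (1 + ν * (t2 * ((i:ℝ)+1)^(-1-2*α)) * κ i ^ 2)^2) := by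
    intro i
    have hk : (0:ℝ) < (i:ℝ)+1 := by positivity
    have hsq : ((i:ℝ)+1)^(-(2+4*α)) = (((i:ℝ)+1)^(-1-2*α))^2 := by
      rw [← Real.rpow_natCast (((i:ℝ)+1)^(-1-2*α)) 2, ← Real.rpow_mul (le_of_lt hk)]
      congr 1
      push_cast
      ring
    rw [hsq]
    have h1 : (0:ℝ) < 1 + ν * (t2 * ((i:ℝ)+1)^(-1-2*α)) * κ i ^ 2 := by
      have := hd0 i; linarith
    field_simp
  have htsum : (∑' i : ℕ, (t2 * ((i:ℝ)+1)^(-1-2*α) /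
        (1 + ν * (t2 * ((i:ℝ)+1)^(-1-2*α)) * κ i ^ 2))^2)
      = t2^2 * ∑' i : ℕ, ((i:ℝ)+1)^(-(2+4*α)) /
          (1 + ν * (t2 * ((i:ℝ)+1)^(-1-2*α)) * κ i ^ 2)^2 := by
    rw [tsum_congr hrepr, tsum_mul_left]
  have hsand := sandwich_core (β := 1+2*α+2*p) (r := 2+4*α)
    (by linarith) (by linarith) (by linarith) hm₁ hm₁₂
    (fun i => ν * (t2 * ((i:ℝ)+1)^(-1-2*α)) * κ i ^ 2)
    (fun i => (Dfacts hα hc₁ κ hκ hν ht2 i).1)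
    (fun i => (Dfacts hα hc₁ κ hκ hν ht2 i).2)
  have hexpσ : (ν*t2) ^ (-((1+4*α)/(1+2*α+2*p))) = (ν*t2) ^ ((1-(2+4*α))/(1+2*α+2*p)) := by
    congr 1
    ring
  have hms2 : (c₂^2*(ν*t2)) ^ ((1-(2+4*α))/(1+2*α+2*p))
      = (c₂^2)^((1-(2+4*α))/(1+2*α+2*p)) * (ν*t2)^((1-(2+4*α))/(1+2*α+2*p)) :=
    Real.mul_rpow (sq_nonneg c₂) (le_of_lt hσ)
  have hms1 : (c₁^2*(ν*t2)) ^ ((1-(2+4*α))/(1+2*α+2*p))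
      = (c₁^2)^((1-(2+4*α))/(1+2*α+2*p)) * (ν*t2)^((1-(2+4*α))/(1+2*α+2*p)) :=
    Real.mul_rpow (sq_nonneg c₁) (le_of_lt hσ)
  rw [htsum]
  constructor
  · calc cLO (2+4*α) (1+2*α+2*p) c₂ * (t2^2 * (ν*t2) ^ (-((1+4*α)/(1+2*α+2*p))))
        = t2^2 * (((3:ℝ)^(1-(2+4*α))/(4*((2+4*α)-1))) *
            (c₂^2*(ν*t2))^((1-(2+4*α))/(1+2*α+2*p))) := by
          rw [hexpσ, hms2]; unfold cLO; ring
      _ ≤ _ := mul_le_mul_of_nonneg_left hsand.1 (by positivity)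
  · calc t2^2 * (∑' i : ℕ, ((i:ℝ)+1)^(-(2+4*α)) /
          (1 + ν * (t2 * ((i:ℝ)+1)^(-1-2*α)) * κ i ^ 2)^2)
        ≤ t2^2 * (((2:ℝ)^(2*(1+2*α+2*p)-(2+4*α)+1) + (2+4*α)/((2+4*α)-1)) *
            (c₁^2*(ν*t2))^((1-(2+4*α))/(1+2*α+2*p))) :=
          mul_le_mul_of_nonneg_left hsand.2 (by positivity)
      _ = cUP (2+4*α) (1+2*α+2*p) c₁ * (t2^2 * (ν*t2) ^ (-((1+4*α)/(1+2*α+2*p)))) := by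
          rw [hexpσ, hms1]; unfold cUP; ring

set_option maxHeartbeats 1000000 in
lemma masterC {p α c₁ c₂ ν t2 : ℝ} (hp : 0 ≤ p) (hα : 0 < α) (hc₁ : 0 < c₁) (hc₁₂ : c₁ ≤ c₂)
    (κ : ℕ → ℝ)
    (hκ : ∀ i : ℕ, c₁ * ((i : ℝ) + 1) ^ (-p) ≤ κ i ∧ κ i ≤ c₂ * ((i : ℝ) + 1) ^ (-p))
    (hν : 0 ≤ ν) (ht2 : 0 < t2) (hm₁ : 1 ≤ c₁^2 * (ν*t2)) :
    cWIN (2+4*α) (1+2*α+2*p) c₁ c₂ * (t2^2 * (ν*t2) ^ (-((1+4*α)/(1+2*α+2*p)))) ≤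
      (∑' i : ℕ, (ν * (t2 * ((i:ℝ)+1)^(-1-2*α))^2 * κ i ^ 2 /
        (1 + ν * (t2 * ((i:ℝ)+1)^(-1-2*α)) * κ i ^ 2)^2)^2) ∧
    (∑' i : ℕ, (ν * (t2 * ((i:ℝ)+1)^(-1-2*α))^2 * κ i ^ 2 /
        (1 + ν * (t2 * ((i:ℝ)+1)^(-1-2*α)) * κ i ^ 2)^2)^2) ≤
      cUP (2+4*α) (1+2*α+2*p) c₁ * (t2^2 * (ν*t2) ^ (-((1+4*α)/(1+2*α+2*p)))) := by
  have hσ : 0 < ν*t2 := by nlinarith [pow_pos hc₁ 2]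
  have hm₁₂ : c₁^2 * (ν*t2) ≤ c₂^2 * (ν*t2) := by
    nlinarith [sq_nonneg c₁, sq_nonneg c₂, mul_self_le_mul_self (le_of_lt hc₁) hc₁₂]
  have hm₂1 : 1 ≤ c₂^2 * (ν*t2) := le_trans hm₁ hm₁₂
  have hm₁0 : 0 < c₁^2 * (ν*t2) := by positivity
  have hd0 : ∀ i : ℕ, 0 ≤ ν * (t2 * ((i:ℝ)+1)^(-1-2*α)) * κ i ^ 2 := by
    intro i
    exact mul_nonneg (mul_nonneg hν (by positivity)) (sq_nonneg _)
  have hden : ∀ i : ℕ, (0:ℝ) < 1 + ν * (t2 * ((i:ℝ)+1)^(-1-2*α)) * κ i ^ 2 := by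
    intro i; have := hd0 i; linarith
  -- representation: T_i^2 = t2^2 * G i
  have hrepr : ∀ i : ℕ,
      (ν * (t2 * ((i:ℝ)+1)^(-1-2*α))^2 * κ i ^ 2 /
        (1 + ν * (t2 * ((i:ℝ)+1)^(-1-2*α)) * κ i ^ 2)^2)^2
      = t2^2 * (((i:ℝ)+1)^(-(2+4*α)) *
          ((ν * (t2 * ((i:ℝ)+1)^(-1-2*α)) * κ i ^ 2) /
            (1 + ν * (t2 * ((i:ℝ)+1)^(-1-2*α)) * κ i ^ 2)^2)^2) := by
    intro i
    have hk : (0:ℝ) < (i:ℝ)+1 := by positivity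
    have hsq : ((i:ℝ)+1)^(-(2+4*α)) = (((i:ℝ)+1)^(-1-2*α))^2 := by
      rw [← Real.rpow_natCast (((i:ℝ)+1)^(-1-2*α)) 2, ← Real.rpow_mul (le_of_lt hk)]
      congr 1
      push_cast
      ring
    rw [hsq]
    have h1 := hden i
    field_simp
  have htsum : (∑' i : ℕ, (ν * (t2 * ((i:ℝ)+1)^(-1-2*α))^2 * κ i ^ 2 /
        (1 + ν * (t2 * ((i:ℝ)+1)^(-1-2*α)) * κ i ^ 2)^2)^2)
      = t2^2 * ∑' i : ℕ, ((i:ℝ)+1)^(-(2+4*α)) *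
          ((ν * (t2 * ((i:ℝ)+1)^(-1-2*α)) * κ i ^ 2) /
            (1 + ν * (t2 * ((i:ℝ)+1)^(-1-2*α)) * κ i ^ 2)^2)^2 := by
    rw [tsum_congr hrepr, tsum_mul_left]
  constructor
  · -- lower bound via the window lemma
    have hwin := window_lower (β := 1+2*α+2*p) (r := 2+4*α)
      (m₁ := c₁^2 * (ν*t2)) (m₂ := c₂^2 * (ν*t2))
      (by linarith) (by linarith) hm₁0 hm₁₂ hm₂1
      (fun i => ν * (t2 * ((i:ℝ)+1)^(-1-2*α)) * κ i ^ 2)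
      (fun i => ((i:ℝ)+1)^(-(2+4*α)) *
          ((ν * (t2 * ((i:ℝ)+1)^(-1-2*α)) * κ i ^ 2) /
            (1 + ν * (t2 * ((i:ℝ)+1)^(-1-2*α)) * κ i ^ 2)^2)^2)
      (fun i => (Dfacts hα hc₁ κ hκ hν ht2 i).1)
      (fun i => (Dfacts hα hc₁ κ hκ hν ht2 i).2)
      (fun i => rfl)
    rw [htsum]
    have hratio : c₁^2 * (ν*t2) / (c₂^2 * (ν*t2)) = c₁^2/c₂^2 :=
      mul_div_mul_right _ _ (ne_of_gt hσ)
    have hexpσ : (ν*t2) ^ (-((1+4*α)/(1+2*α+2*p))) = (ν*t2) ^ ((1-(2+4*α))/(1+2*α+2*p)) := by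
      congr 1
      ring
    have hms2 : (c₂^2*(ν*t2)) ^ ((1-(2+4*α))/(1+2*α+2*p))
        = (c₂^2)^((1-(2+4*α))/(1+2*α+2*p)) * (ν*t2)^((1-(2+4*α))/(1+2*α+2*p)) :=
      Real.mul_rpow (sq_nonneg c₂) (le_of_lt hσ)
    calc cWIN (2+4*α) (1+2*α+2*p) c₁ c₂ * (t2^2 * (ν*t2) ^ (-((1+4*α)/(1+2*α+2*p))))
        = t2^2 * ((5:ℝ)^(-(2+4*α)) *
            ((c₁^2 * (ν*t2) / (c₂^2 * (ν*t2))) * (5:ℝ)^(-(1+2*α+2*p)) / 4)^2 *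
            (c₂^2*(ν*t2)) ^ ((1-(2+4*α))/(1+2*α+2*p))) := by
          rw [hratio, hexpσ, hms2]; unfold cWIN; ring
      _ ≤ _ := mul_le_mul_of_nonneg_left hwin (by positivity)
  · -- upper bound: T_i^2 ≤ s_i^2 termwise
    have hTle : ∀ i : ℕ,
        (ν * (t2 * ((i:ℝ)+1)^(-1-2*α))^2 * κ i ^ 2 /
          (1 + ν * (t2 * ((i:ℝ)+1)^(-1-2*α)) * κ i ^ 2)^2)^2
        ≤ (t2 * ((i:ℝ)+1)^(-1-2*α) / (1 + ν * (t2 * ((i:ℝ)+1)^(-1-2*α)) * κ i ^ 2))^2 := by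
      intro i
      have hk : (0:ℝ) < (i:ℝ)+1 := by positivity
      have h1 := hden i
      have hd := hd0 i
      have hlam : (0:ℝ) ≤ t2 * ((i:ℝ)+1)^(-1-2*α) := by positivity
      have hT0 : 0 ≤ ν * (t2 * ((i:ℝ)+1)^(-1-2*α))^2 * κ i ^ 2 /
          (1 + ν * (t2 * ((i:ℝ)+1)^(-1-2*α)) * κ i ^ 2)^2 := by
        apply div_nonneg _ (sq_nonneg _)
        exact mul_nonneg (mul_nonneg hν (sq_nonneg _)) (sq_nonneg _)
      have hTs : ν * (t2 * ((i:ℝ)+1)^(-1-2*α))^2 * κ i ^ 2 /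
            (1 + ν * (t2 * ((i:ℝ)+1)^(-1-2*α)) * κ i ^ 2)^2
          ≤ t2 * ((i:ℝ)+1)^(-1-2*α) / (1 + ν * (t2 * ((i:ℝ)+1)^(-1-2*α)) * κ i ^ 2) := by
        rw [div_le_div_iff₀ (by positivity) h1]
        nlinarith [mul_nonneg (mul_nonneg hν (sq_nonneg (t2 * ((i:ℝ)+1)^(-1-2*α)))) (sq_nonneg (κ i)),
          mul_nonneg hlam hd]
      exact pow_le_pow_left₀ hT0 hTs 2
    have hsumS : Summable (fun i : ℕ =>
        (t2 * ((i:ℝ)+1)^(-1-2*α) / (1 + ν * (t2 * ((i:ℝ)+1)^(-1-2*α)) * κ i ^ 2))^2) := by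
      have hreprB : ∀ i : ℕ,
          (t2 * ((i:ℝ)+1)^(-1-2*α) / (1 + ν * (t2 * ((i:ℝ)+1)^(-1-2*α)) * κ i ^ 2))^2
          = t2^2 * (((i:ℝ)+1)^(-(2+4*α)) /
              (1 + ν * (t2 * ((i:ℝ)+1)^(-1-2*α)) * κ i ^ 2)^2) := by
        intro i
        have hk : (0:ℝ) < (i:ℝ)+1 := by positivity
        have hsq : ((i:ℝ)+1)^(-(2+4*α)) = (((i:ℝ)+1)^(-1-2*α))^2 := by
          rw [← Real.rpow_natCast (((i:ℝ)+1)^(-1-2*α)) 2, ← Real.rpow_mul (le_of_lt hk)]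
          congr 1
          push_cast
          ring
        rw [hsq]
        have h1 := hden i
        field_simp
      rw [funext hreprB]
      apply Summable.mul_left
      apply Summable.of_nonneg_of_le _ _ (summable_aux (r := 2+4*α) (by linarith))
      · intro i
        apply div_nonneg (Real.rpow_nonneg (by positivity) _) (sq_nonneg _)
      · intro i
        apply div_le_self (Real.rpow_nonneg (by positivity) _)
        nlinarith [hd0 i]
    have hsumT : Summable (fun i : ℕ =>
        (ν * (t2 * ((i:ℝ)+1)^(-1-2*α))^2 * κ i ^ 2 /
          (1 + ν * (t2 * ((i:ℝ)+1)^(-1-2*α)) * κ i ^ 2)^2)^2) := by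
      apply Summable.of_nonneg_of_le _ hTle hsumS
      intro i
      exact sq_nonneg _
    calc (∑' i : ℕ, (ν * (t2 * ((i:ℝ)+1)^(-1-2*α))^2 * κ i ^ 2 /
          (1 + ν * (t2 * ((i:ℝ)+1)^(-1-2*α)) * κ i ^ 2)^2)^2)
        ≤ (∑' i : ℕ, (t2 * ((i:ℝ)+1)^(-1-2*α) /
            (1 + ν * (t2 * ((i:ℝ)+1)^(-1-2*α)) * κ i ^ 2))^2) :=
          Summable.tsum_le_tsum hTle hsumT hsumS
      _ ≤ cUP (2+4*α) (1+2*α+2*p) c₁ * (t2^2 * (ν*t2) ^ (-((1+4*α)/(1+2*α+2*p)))) :=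
          (masterB hp hα hc₁ hc₁₂ κ hκ hν ht2 hm₁).2

lemma cUP_pos {r β c : ℝ} (hr : 1 < r) (hc : 0 < c) : 0 < cUP r β c := by
  unfold cUP
  apply mul_pos
  · have h1 : (0:ℝ) < (2:ℝ)^(2*β-r+1) := Real.rpow_pos_of_pos (by norm_num) _
    have h2 : (0:ℝ) < r/(r-1) := div_pos (by linarith) (by linarith)
    linarith
  · exact Real.rpow_pos_of_pos (by positivity) _


set_option maxHeartbeats 2000000 in
/-- Eigenvalue comparison for the credibility proof: with
`s_{i,n} = λᵢ/(1+nλᵢκᵢ²)` and `t_{i,n} = nλᵢ²κᵢ²/(1+nλᵢκᵢ²)²`, one has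
`∑(s-t) ≍ τ_n²(nτ_n²)^{-2α/(1+2α+2p)}` and
`∑ s² ≍ ∑ t² ≍ τ_n⁴(nτ_n²)^{-(1+4α)/(1+2α+2p)}`; consequently the standard
deviations of `U_n` and `V_n` are of smaller order than `E(U_n - V_n)`. -/
theorem stmt11 (p α : ℝ) (hp : 0 ≤ p) (hα : 0 < α)
    (τ : ℕ → ℝ) (hτpos : ∀ n, 0 < τ n)
    (hnτ : Tendsto (fun n : ℕ => (n : ℝ) * (τ n) ^ 2) atTop atTop)
    (κ : ℕ → ℝ) (c₁ c₂ : ℝ) (hc₁ : 0 < c₁)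
    (hκ : ∀ i : ℕ, c₁ * ((i : ℝ) + 1) ^ (-p) ≤ κ i ∧ κ i ≤ c₂ * ((i : ℝ) + 1) ^ (-p)) :
    let lam : ℕ → ℕ → ℝ := fun n i => (τ n) ^ 2 * ((i : ℝ) + 1) ^ (-1 - 2 * α)
    let s : ℕ → ℕ → ℝ := fun n i => lam n i / (1 + (n : ℝ) * lam n i * (κ i) ^ 2)
    let T : ℕ → ℕ → ℝ := fun n i =>
      (n : ℝ) * (lam n i) ^ 2 * (κ i) ^ 2 / (1 + (n : ℝ) * lam n i * (κ i) ^ 2) ^ 2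
    let rate1 : ℕ → ℝ := fun n =>
      (τ n) ^ 2 * ((n : ℝ) * (τ n) ^ 2) ^ (-(2 * α / (1 + 2 * α + 2 * p)))
    let rate2 : ℕ → ℝ := fun n =>
      (τ n) ^ 4 * ((n : ℝ) * (τ n) ^ 2) ^ (-((1 + 4 * α) / (1 + 2 * α + 2 * p)))
    (∃ c C : ℝ, 0 < c ∧ c ≤ C ∧ ∀ᶠ n : ℕ in atTop,
      c * rate1 n ≤ (∑' i : ℕ, (s n i - T n i)) ∧
      (∑' i : ℕ, (s n i - T n i)) ≤ C * rate1 n) ∧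
    (∃ c C : ℝ, 0 < c ∧ c ≤ C ∧ ∀ᶠ n : ℕ in atTop,
      (c * rate2 n ≤ (∑' i : ℕ, (s n i) ^ 2) ∧ (∑' i : ℕ, (s n i) ^ 2) ≤ C * rate2 n) ∧
      (c * rate2 n ≤ (∑' i : ℕ, (T n i) ^ 2) ∧ (∑' i : ℕ, (T n i) ^ 2) ≤ C * rate2 n)) ∧
    Tendsto (fun n : ℕ =>
        (Real.sqrt (2 * ∑' i : ℕ, (s n i) ^ 2) + Real.sqrt (2 * ∑' i : ℕ, (T n i) ^ 2)) /
          (∑' i : ℕ, (s n i - T n i))) atTop (nhds 0) := by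
  intro lam s T rate1 rate2
  -- basic facts
  have hc₁₂ : c₁ ≤ c₂ := by
    have h0 := hκ 0
    have h1 : ((0:ℕ):ℝ) + 1 = 1 := by norm_num
    rw [h1, Real.one_rpow, mul_one, mul_one] at h0
    linarith [h0.1, h0.2]
  have hc₂ : 0 < c₂ := lt_of_lt_of_le hc₁ hc₁₂
  have hβ : (1:ℝ) < 1+2*α+2*p := by linarith
  have hr1 : (1:ℝ) < 1+2*α := by linarith
  have hr2 : (1:ℝ) < 2+4*α := by linarith
  -- eventual hypothesis
  have hev : ∀ᶠ n : ℕ in atTop, 1 ≤ c₁^2 * ((n:ℝ) * τ n ^ 2) := by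
    filter_upwards [hnτ.eventually_ge_atTop ((c₁^2)⁻¹)] with n hn
    have hc₁2 : (0:ℝ) < c₁^2 := pow_pos hc₁ 2
    calc (1:ℝ) = c₁^2 * (c₁^2)⁻¹ := (mul_inv_cancel₀ (ne_of_gt hc₁2)).symm
      _ ≤ c₁^2 * ((n:ℝ) * τ n ^ 2) := mul_le_mul_of_nonneg_left hn (le_of_lt hc₁2)
  have hrate1_nonneg : ∀ n : ℕ, 0 ≤ rate1 n := by
    intro n
    simp only [rate1]
    positivity
  have hrate2B_nonneg : ∀ n : ℕ, (0:ℝ) ≤ (τ n^2)^2 * ((n:ℝ) * τ n ^ 2) ^ (-((1+4*α)/(1+2*α+2*p))) := by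
    intro n
    positivity
  refine ⟨?_, ?_, ?_⟩
  · -- Part 1
    refine ⟨cLO (1+2*α) (1+2*α+2*p) c₂,
      max (cUP (1+2*α) (1+2*α+2*p) c₁) (cLO (1+2*α) (1+2*α+2*p) c₂),
      cLO_pos hr1 hc₂, le_max_right _ _, ?_⟩
    filter_upwards [hev] with n hn
    simp only [lam, s, T, rate1]
    have hA := masterA hp hα hc₁ hc₁₂ κ hκ (Nat.cast_nonneg n) (pow_pos (hτpos n) 2) hn
    refine ⟨hA.1, le_trans hA.2 ?_⟩
    apply mul_le_mul_of_nonneg_right (le_max_left _ _)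
    positivity
  · -- Part 2
    refine ⟨min (cLO (2+4*α) (1+2*α+2*p) c₂) (cWIN (2+4*α) (1+2*α+2*p) c₁ c₂),
      max (cUP (2+4*α) (1+2*α+2*p) c₁)
        (min (cLO (2+4*α) (1+2*α+2*p) c₂) (cWIN (2+4*α) (1+2*α+2*p) c₁ c₂)),
      lt_min (cLO_pos hr2 hc₂) (cWIN_pos hc₁ hc₂), le_max_right _ _, ?_⟩
    filter_upwards [hev] with n hn
    simp only [lam, s, T, rate2]
    have hB := masterB hp hα hc₁ hc₁₂ κ hκ (Nat.cast_nonneg n) (pow_pos (hτpos n) 2) hn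
    have hC := masterC hp hα hc₁ hc₁₂ κ hκ (Nat.cast_nonneg n) (pow_pos (hτpos n) 2) hn
    have h4 : (τ n:ℝ)^4 = ((τ n)^2)^2 := by ring
    rw [h4]
    have hR := hrate2B_nonneg n
    constructor
    · constructor
      · refine le_trans ?_ hB.1
        apply mul_le_mul_of_nonneg_right (min_le_left _ _) hR
      · refine le_trans hB.2 ?_
        apply mul_le_mul_of_nonneg_right (le_max_left _ _) hR
    · constructor
      · refine le_trans ?_ hC.1
        apply mul_le_mul_of_nonneg_right (min_le_right _ _) hR
      · refine le_trans hC.2 ?_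
        apply mul_le_mul_of_nonneg_right (le_max_left _ _) hR
  · -- Part 3 : the limit
    set β : ℝ := 1+2*α+2*p with hβdef
    set a1 : ℝ := cLO (1+2*α) β c₂ with ha1def
    set b2 : ℝ := cUP (2+4*α) β c₁ with hb2def
    have ha1 : 0 < a1 := cLO_pos hr1 hc₂
    have hb2 : 0 < b2 := cUP_pos hr2 hc₁
    set K : ℝ := 2 * Real.sqrt (2*b2) / a1 with hKdef
    have hKpos : 0 ≤ K := by positivity
    apply squeeze_zero' (g := fun n : ℕ => K * ((n:ℝ) * τ n ^ 2) ^ (-(1/(2*β))))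
    · -- nonnegativity
      filter_upwards [hev] with n hn
      simp only [lam, s, T]
      have hA := masterA hp hα hc₁ hc₁₂ κ hκ (Nat.cast_nonneg n) (pow_pos (hτpos n) 2) hn
      have hσ : (0:ℝ) < (n:ℝ) * τ n ^ 2 := by nlinarith [pow_pos hc₁ 2]
      have hrpos : (0:ℝ) < τ n^2 * ((n:ℝ) * τ n ^ 2) ^ (-(2*α/(1+2*α+2*p))) :=
        mul_pos (pow_pos (hτpos n) 2) (Real.rpow_pos_of_pos hσ _)
      have hden : 0 < ∑' i : ℕ, (τ n ^ 2 * ((i:ℝ)+1)^(-1-2*α) /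
            (1 + (n:ℝ) * (τ n ^ 2 * ((i:ℝ)+1)^(-1-2*α)) * κ i ^ 2) -
          (n:ℝ) * (τ n ^ 2 * ((i:ℝ)+1)^(-1-2*α))^2 * κ i ^ 2 /
            (1 + (n:ℝ) * (τ n ^ 2 * ((i:ℝ)+1)^(-1-2*α)) * κ i ^ 2)^2) :=
        lt_of_lt_of_le (mul_pos ha1 hrpos) hA.1
      apply div_nonneg _ (le_of_lt hden)
      positivity
    · -- upper bound
      filter_upwards [hev] with n hn
      simp only [lam, s, T]
      have hν : (0:ℝ) ≤ (n:ℝ) := Nat.cast_nonneg n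
      have ht2 : (0:ℝ) < τ n ^ 2 := pow_pos (hτpos n) 2
      have hA := masterA hp hα hc₁ hc₁₂ κ hκ hν ht2 hn
      have hB := masterB hp hα hc₁ hc₁₂ κ hκ hν ht2 hn
      have hC := masterC hp hα hc₁ hc₁₂ κ hκ hν ht2 hn
      have hσ : (0:ℝ) < (n:ℝ) * τ n ^ 2 := by nlinarith [pow_pos hc₁ 2]
      set σ : ℝ := (n:ℝ) * τ n ^ 2 with hσdef
      set e2 : ℝ := -((1+4*α)/β) with he2def
      set R2 : ℝ := (τ n^2)^2 * σ ^ e2 with hR2def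
      have hR2pos : 0 < R2 := mul_pos (by positivity) (Real.rpow_pos_of_pos hσ _)
      have hrpos : (0:ℝ) < τ n^2 * σ ^ (-(2*α/β)) :=
        mul_pos ht2 (Real.rpow_pos_of_pos hσ _)
      have hdenlow : a1 * (τ n^2 * σ ^ (-(2*α/β))) ≤ _ := hA.1
      have hdenpos : 0 < a1 * (τ n^2 * σ ^ (-(2*α/β))) := mul_pos ha1 hrpos
      -- numerator bound
      have hnum1 : Real.sqrt (2 * ∑' i : ℕ, (τ n ^ 2 * ((i:ℝ)+1)^(-1-2*α) /
          (1 + (n:ℝ) * (τ n ^ 2 * ((i:ℝ)+1)^(-1-2*α)) * κ i ^ 2))^2)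
          ≤ Real.sqrt (2 * (b2 * R2)) := by
        apply Real.sqrt_le_sqrt
        have := hB.2
        nlinarith [this]
      have hnum2 : Real.sqrt (2 * ∑' i : ℕ, ((n:ℝ) * (τ n ^ 2 * ((i:ℝ)+1)^(-1-2*α))^2 * κ i ^ 2 /
          (1 + (n:ℝ) * (τ n ^ 2 * ((i:ℝ)+1)^(-1-2*α)) * κ i ^ 2)^2)^2)
          ≤ Real.sqrt (2 * (b2 * R2)) := by
        apply Real.sqrt_le_sqrt
        have := hC.2
        nlinarith [this]
      have hnumle := add_le_add hnum1 hnum2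
      rw [← two_mul] at hnumle
      have hnum0 : (0:ℝ) ≤ 2 * Real.sqrt (2 * (b2 * R2)) := by positivity
      -- the division bound
      have hdiv := div_le_div₀ hnum0 hnumle hdenpos hdenlow
      refine le_trans hdiv ?_
      -- now compute
      have hsqrtR2 : Real.sqrt R2 = τ n^2 * σ ^ (e2/2) := by
        rw [hR2def, Real.sqrt_mul (sq_nonneg _)]
        rw [Real.sqrt_sq (le_of_lt ht2)]
        congr 1
        have : σ ^ e2 = (σ ^ (e2/2))^2 := by
          rw [← Real.rpow_natCast (σ ^ (e2/2)) 2, ← Real.rpow_mul (le_of_lt hσ)]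
          congr 1
          push_cast
          ring
        rw [this, Real.sqrt_sq (Real.rpow_nonneg (le_of_lt hσ) _)]
      have hsplit : Real.sqrt (2*(b2*R2)) = Real.sqrt (2*b2) * (τ n^2 * σ ^ (e2/2)) := by
        rw [show 2*(b2*R2) = (2*b2)*R2 from by ring,
          Real.sqrt_mul (by positivity) R2, hsqrtR2]
      rw [hsplit]
      have hτ2ne : (τ n:ℝ)^2 ≠ 0 := ne_of_gt ht2
      have hrpne : σ ^ (-(2*α/β)) ≠ 0 := ne_of_gt (Real.rpow_pos_of_pos hσ _)
      have heq : 2 * (Real.sqrt (2*b2) * (τ n^2 * σ ^ (e2/2))) / (a1 * (τ n^2 * σ ^ (-(2*α/β))))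
          = K * (σ ^ (e2/2) / σ ^ (-(2*α/β))) := by
        rw [hKdef]
        field_simp
        ring_nf
        exact mul_inv_cancel₀ (ne_of_gt (hτpos n))
      rw [heq, ← Real.rpow_sub hσ]
      have hexp : e2/2 - (-(2*α/β)) = -(1/(2*β)) := by
        rw [he2def]
        have hβ0 : β ≠ 0 := by rw [hβdef]; linarith
        field_simp
        ring
      rw [hexp]
    · -- the comparison sequence tends to zero
      have hpos : (0:ℝ) < 1/(2*β) := by
        rw [hβdef]
        positivity
      have h1 := (tendsto_rpow_neg_atTop hpos).comp hnτ
      have h2 := h1.const_mul K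
      simpa [mul_zero] using h2
end

section
/- For the Cauchy–Schwarz bound on the bias of the posterior mean of a linear functional: for any μ₀ with ‖μ₀‖_β < ∞ and any sequence (l_i), one has (Σ_i l_iμ_{0,i}/(1+nλ_iκ_i²))² ≤ ‖μ₀‖_β² · Σ_i l_i² i^{-2β}/(1+nλ_iκ_i²)²; consequently, if λ_iκ_i² ≍ τ_n² i^{-1-2α-2p} and Σ_i l_i²i^{2q} < ∞ with q ≥ −β, then |LAKμ₀ − Lμ₀| ≲ ‖μ₀‖_β ‖l‖_q (nτ_n²)^{-min((β+q)/(1+2α+2p), 1)}. -/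
open Filter Topology

lemma cs_tsum (a b : ℕ → ℝ) (ha : Summable fun i => a i ^ 2) (hb : Summable fun i => b i ^ 2) :
    (∑' i, a i * b i) ^ 2 ≤ (∑' i, a i ^ 2) * (∑' i, b i ^ 2) := by
  have hab : Summable (fun i => a i * b i) := by
    apply Summable.of_abs
    apply Summable.of_nonneg_of_le (fun i => abs_nonneg _)
      (fun i => ?_) (((ha.add hb).div_const 2))
    rw [abs_mul]
    have h2 : 2 * |a i| * |b i| ≤ |a i| ^ 2 + |b i| ^ 2 := two_mul_le_add_sq _ _
    simp only [sq_abs] at h2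
    nlinarith [abs_nonneg (a i), abs_nonneg (b i)]
  have key : ∀ n : ℕ, (∑ i ∈ Finset.range n, a i * b i) ^ 2 ≤
      (∑' i, a i ^ 2) * (∑' i, b i ^ 2) := by
    intro n
    calc (∑ i ∈ Finset.range n, a i * b i) ^ 2
        ≤ (∑ i ∈ Finset.range n, a i ^ 2) * (∑ i ∈ Finset.range n, b i ^ 2) :=
          Finset.sum_mul_sq_le_sq_mul_sq _ _ _
      _ ≤ (∑' i, a i ^ 2) * (∑' i, b i ^ 2) := by
          apply mul_le_mul (ha.sum_le_tsum _ (fun i _ => sq_nonneg _))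
            (hb.sum_le_tsum _ (fun i _ => sq_nonneg _))
            (Finset.sum_nonneg fun i _ => sq_nonneg _) (tsum_nonneg fun i => sq_nonneg _)
  have ht : Tendsto (fun n : ℕ => (∑ i ∈ Finset.range n, a i * b i) ^ 2) atTop
      (𝓝 ((∑' i, a i * b i) ^ 2)) := (hab.hasSum.tendsto_sum_nat).pow 2
  exact le_of_tendsto ht (Eventually.of_forall key)

lemma max_one_rpow_ge {y t : ℝ} (hy : 0 ≤ y) (ht0 : 0 ≤ t) (ht1 : t ≤ 1) :
    y ^ t ≤ max 1 y := by
  rcases le_total y 1 with h | h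
  · exact le_max_of_le_left (Real.rpow_le_one hy h ht0)
  · refine le_max_of_le_right ?_
    calc y ^ t ≤ y ^ (1:ℝ) := Real.rpow_le_rpow_of_exponent_le h ht1
      _ = y := Real.rpow_one y

lemma rpow_sq {x : ℝ} (hx : 0 ≤ x) (e : ℝ) : (x ^ e) ^ 2 = x ^ (2 * e) := by
  rw [← Real.rpow_natCast (x ^ e) 2, ← Real.rpow_mul hx]
  norm_num [mul_comm]

lemma denom_bound {A x r s t Dv : ℝ} (hA : 0 < A) (hx : 1 ≤ x)
    (ht0 : 0 ≤ t) (ht1 : t ≤ 1) (hrt : r * t ≤ s) (hDv1 : 1 ≤ Dv)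
    (hDv2 : A * x ^ (-r) ≤ Dv) :
    x ^ (-(2 * s)) / Dv ^ 2 ≤ A ^ (-(2 * t)) := by
  have hx0 : 0 < x := lt_of_lt_of_le one_pos hx
  have hxr : 0 < x ^ (-r) := Real.rpow_pos_of_pos hx0 _
  have hy0 : 0 < A * x ^ (-r) := mul_pos hA hxr
  have hw0 : 0 < (A * x ^ (-r)) ^ t := Real.rpow_pos_of_pos hy0 _
  have h1 : (A * x ^ (-r)) ^ t ≤ Dv :=
    le_trans (max_one_rpow_ge hy0.le ht0 ht1) (max_le hDv1 hDv2)
  have step1 : x ^ (-(2 * s)) / Dv ^ 2 ≤ x ^ (-(2 * s)) / ((A * x ^ (-r)) ^ t) ^ 2 := by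
    gcongr
  refine step1.trans ?_
  rw [div_le_iff₀ (pow_pos hw0 2)]
  have e1 : A ^ (-(2 * t)) * ((A * x ^ (-r)) ^ t) ^ 2 = x ^ (-(r * (t * 2))) := by
    rw [rpow_sq hy0.le, Real.mul_rpow hA.le hxr.le, ← Real.rpow_mul hx0.le,
        ← mul_assoc, ← Real.rpow_add hA]
    rw [show -(2*t) + 2*t = 0 by ring, Real.rpow_zero, one_mul,
        show (-r) * (2 * t) = -(r * (t * 2)) by ring]
  rw [e1]
  exact Real.rpow_le_rpow_of_exponent_le hx (by nlinarith)

/-- Cauchy–Schwarz bound on the bias of the posterior mean of a linear functional,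
and its consequence: `(∑ l_iμ_{0,i}/(1+nλ_iκ_i²))² ≤ ‖μ₀‖_β² ∑ l_i²i^{-2β}/(1+nλ_iκ_i²)²`,
and if `λ_i = τ_n²i^{-1-2α}`, `κ_i ≍ i^{-p}` and `l ∈ S^q` with `q ≥ -β`, then
`|LAKμ₀ - Lμ₀| ≲ ‖μ₀‖_β ‖l‖_q (nτ_n²)^{-min((β+q)/(1+2α+2p), 1)}`. -/
theorem stmt17 (p α β q : ℝ) (hp : 0 ≤ p) (hα : 0 < α) (hβ : 0 < β) (hq : -β ≤ q)
    (τ : ℕ → ℝ) (hτpos : ∀ n, 0 < τ n)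
    (hnτ : Tendsto (fun n : ℕ => (n : ℝ) * (τ n) ^ 2) atTop atTop)
    (κ : ℕ → ℝ) (c₁ c₂ : ℝ) (hc₁ : 0 < c₁)
    (hκ : ∀ i : ℕ, c₁ * ((i : ℝ) + 1) ^ (-p) ≤ κ i ∧ κ i ≤ c₂ * ((i : ℝ) + 1) ^ (-p))
    (μ₀ l : ℕ → ℝ)
    (hμ₀ : Summable (fun i : ℕ => (μ₀ i) ^ 2 * ((i : ℝ) + 1) ^ (2 * β)))
    (hl : Summable (fun i : ℕ => (l i) ^ 2 * ((i : ℝ) + 1) ^ (2 * q))) :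
    let lam : ℕ → ℕ → ℝ := fun n i => (τ n) ^ 2 * ((i : ℝ) + 1) ^ (-1 - 2 * α)
    (∀ n : ℕ,
      (∑' i : ℕ, l i * μ₀ i / (1 + (n : ℝ) * lam n i * (κ i) ^ 2)) ^ 2 ≤
        (∑' i : ℕ, (μ₀ i) ^ 2 * ((i : ℝ) + 1) ^ (2 * β)) *
          ∑' i : ℕ, (l i) ^ 2 * ((i : ℝ) + 1) ^ (-2 * β) /
            (1 + (n : ℝ) * lam n i * (κ i) ^ 2) ^ 2) ∧
    (∃ C : ℝ, 0 < C ∧ ∀ᶠ n : ℕ in atTop,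
      |∑' i : ℕ, l i * μ₀ i / (1 + (n : ℝ) * lam n i * (κ i) ^ 2)| ≤
        C * Real.sqrt (∑' i : ℕ, (μ₀ i) ^ 2 * ((i : ℝ) + 1) ^ (2 * β)) *
          Real.sqrt (∑' i : ℕ, (l i) ^ 2 * ((i : ℝ) + 1) ^ (2 * q)) *
          ((n : ℝ) * (τ n) ^ 2) ^ (-(min ((β + q) / (1 + 2 * α + 2 * p)) 1))) := by
  intro lam
  have hlam : ∀ n i : ℕ, lam n i = (τ n) ^ 2 * ((i : ℝ) + 1) ^ (-1 - 2 * α) :=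
    fun n i => rfl
  have hx1 : ∀ i : ℕ, (1:ℝ) ≤ (i : ℝ) + 1 := by
    intro i; have : (0:ℝ) ≤ (i:ℝ) := Nat.cast_nonneg i; linarith
  have hx0 : ∀ i : ℕ, (0:ℝ) < (i : ℝ) + 1 := fun i => lt_of_lt_of_le one_pos (hx1 i)
  -- D bounds
  have hD1 : ∀ n i : ℕ, (1:ℝ) ≤ 1 + (n : ℝ) * lam n i * (κ i) ^ 2 := by
    intro n i
    have h0 : (0:ℝ) ≤ (n : ℝ) * lam n i * (κ i) ^ 2 := by
      rw [hlam n i]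
      have := (hx0 i).le
      positivity
    linarith
  have hD0 : ∀ n i : ℕ, (0:ℝ) < 1 + (n : ℝ) * lam n i * (κ i) ^ 2 :=
    fun n i => lt_of_lt_of_le one_pos (hD1 n i)
  -- the a, b sequences
  set a : ℕ → ℝ := fun i => μ₀ i * ((i : ℝ) + 1) ^ β with ha
  set b : ℕ → ℕ → ℝ :=
    fun n i => l i * ((i : ℝ) + 1) ^ (-β) / (1 + (n : ℝ) * lam n i * (κ i) ^ 2) with hb
  have e₁ : ∀ n i : ℕ, l i * μ₀ i / (1 + (n : ℝ) * lam n i * (κ i) ^ 2) = a i * b n i := by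
    intro n i
    have : ((i : ℝ) + 1) ^ β * ((i : ℝ) + 1) ^ (-β) = 1 := by
      rw [← Real.rpow_add (hx0 i)]; simp
    simp only [ha, hb]
    rw [show μ₀ i * ((i : ℝ) + 1) ^ β *
        (l i * ((i : ℝ) + 1) ^ (-β) / (1 + (n : ℝ) * lam n i * (κ i) ^ 2)) =
        l i * μ₀ i * (((i : ℝ) + 1) ^ β * ((i : ℝ) + 1) ^ (-β)) /
          (1 + (n : ℝ) * lam n i * (κ i) ^ 2) by ring, this, mul_one]
  have e₂ : ∀ i : ℕ, (μ₀ i) ^ 2 * ((i : ℝ) + 1) ^ (2 * β) = a i ^ 2 := by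
    intro i; rw [ha]; simp only [mul_pow, rpow_sq (hx0 i).le]
  have e₃ : ∀ n i : ℕ, (l i) ^ 2 * ((i : ℝ) + 1) ^ (-2 * β) /
      (1 + (n : ℝ) * lam n i * (κ i) ^ 2) ^ 2 = b n i ^ 2 := by
    intro n i; rw [hb]
    simp only [div_pow, mul_pow, rpow_sq (hx0 i).le]
    rw [show (2:ℝ) * (-β) = -2 * β by ring]
  -- bound b² by l² x^{2q}
  have hb2le : ∀ n i : ℕ, b n i ^ 2 ≤ (l i) ^ 2 * ((i : ℝ) + 1) ^ (2 * q) := by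
    intro n i
    rw [← e₃ n i]
    have h1 : ((i : ℝ) + 1) ^ (-2 * β) ≤ ((i : ℝ) + 1) ^ (2 * q) :=
      Real.rpow_le_rpow_of_exponent_le (hx1 i) (by linarith)
    have h2 : (1:ℝ) ≤ (1 + (n : ℝ) * lam n i * (κ i) ^ 2) ^ 2 := by nlinarith [hD1 n i]
    have hxp := (hx0 i).le
    calc (l i) ^ 2 * ((i : ℝ) + 1) ^ (-2 * β) / (1 + (n : ℝ) * lam n i * (κ i) ^ 2) ^ 2
        ≤ (l i) ^ 2 * ((i : ℝ) + 1) ^ (-2 * β) := div_le_self (by positivity) h2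
      _ ≤ (l i) ^ 2 * ((i : ℝ) + 1) ^ (2 * q) :=
          mul_le_mul_of_nonneg_left h1 (sq_nonneg _)
  have hb2 : ∀ n : ℕ, Summable (fun i => b n i ^ 2) :=
    fun n => Summable.of_nonneg_of_le (fun i => sq_nonneg _) (fun i => hb2le n i) hl
  have ha2 : Summable (fun i => a i ^ 2) := (summable_congr fun i => (e₂ i)).mp hμ₀
  have part1 : ∀ n : ℕ,
      (∑' i : ℕ, l i * μ₀ i / (1 + (n : ℝ) * lam n i * (κ i) ^ 2)) ^ 2 ≤
        (∑' i : ℕ, (μ₀ i) ^ 2 * ((i : ℝ) + 1) ^ (2 * β)) *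
          ∑' i : ℕ, (l i) ^ 2 * ((i : ℝ) + 1) ^ (-2 * β) /
            (1 + (n : ℝ) * lam n i * (κ i) ^ 2) ^ 2 := by
    intro n
    rw [tsum_congr (e₁ n), tsum_congr e₂, tsum_congr (e₃ n)]
    exact cs_tsum a (b n) ha2 (hb2 n)
  refine ⟨part1, ?_⟩
  -- Part 2
  set t : ℝ := min ((β + q) / (1 + 2 * α + 2 * p)) 1 with htdef
  set r : ℝ := 1 + 2 * α + 2 * p with hrdef
  set s : ℝ := β + q with hsdef
  have hr0 : 0 < r := by rw [hrdef]; linarith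
  have hs0 : 0 ≤ s := by rw [hsdef]; linarith
  have ht0 : 0 ≤ t := le_min (div_nonneg hs0 hr0.le) zero_le_one
  have ht1 : t ≤ 1 := min_le_right _ _
  have hrt : r * t ≤ s := by
    have h := min_le_left ((β + q) / (1 + 2 * α + 2 * p)) 1
    rw [← htdef] at h
    calc r * t ≤ r * (s / r) := by
          apply mul_le_mul_of_nonneg_left _ hr0.le
          exact h
      _ = s := by field_simp
  refine ⟨(c₁ ^ 2) ^ (-t), Real.rpow_pos_of_pos (by positivity) _, ?_⟩
  filter_upwards [hnτ.eventually_ge_atTop 1] with n hm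
  set m : ℝ := (n : ℝ) * (τ n) ^ 2 with hmdef
  have hm0 : 0 < m := lt_of_lt_of_le one_pos hm
  set A : ℝ := ∑' i : ℕ, (μ₀ i) ^ 2 * ((i : ℝ) + 1) ^ (2 * β) with hAdef
  set B : ℝ := ∑' i : ℕ, (l i) ^ 2 * ((i : ℝ) + 1) ^ (2 * q) with hBdef
  have hA0 : 0 ≤ A := tsum_nonneg fun i => by positivity
  have hB0 : 0 ≤ B := tsum_nonneg fun i => by positivity
  have hK0 : 0 < c₁ ^ 2 * m := by positivity
  -- pointwise denominator bound
  have hpt : ∀ i : ℕ, (l i) ^ 2 * ((i : ℝ) + 1) ^ (-2 * β) /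
      (1 + (n : ℝ) * lam n i * (κ i) ^ 2) ^ 2 ≤
      (c₁ ^ 2 * m) ^ (-(2 * t)) * ((l i) ^ 2 * ((i : ℝ) + 1) ^ (2 * q)) := by
    intro i
    have hDv2 : c₁ ^ 2 * m * ((i : ℝ) + 1) ^ (-r) ≤ 1 + (n : ℝ) * lam n i * (κ i) ^ 2 := by
      have hκ1 : c₁ ^ 2 * ((i : ℝ) + 1) ^ (-(2 * p)) ≤ (κ i) ^ 2 := by
        have h := (hκ i).1
        have h0 : (0:ℝ) ≤ c₁ * ((i : ℝ) + 1) ^ (-p) := by positivity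
        have := pow_le_pow_left₀ h0 h 2
        calc c₁ ^ 2 * ((i : ℝ) + 1) ^ (-(2 * p))
            = (c₁ * ((i : ℝ) + 1) ^ (-p)) ^ 2 := by
              rw [mul_pow, rpow_sq (hx0 i).le]; ring_nf
          _ ≤ (κ i) ^ 2 := this
      have key : (n : ℝ) * lam n i * (κ i) ^ 2 ≥ c₁ ^ 2 * m * ((i : ℝ) + 1) ^ (-r) := by
        rw [hlam n i, hmdef]
        have expand : c₁ ^ 2 * ((n : ℝ) * (τ n) ^ 2) * ((i : ℝ) + 1) ^ (-r) =
            (n : ℝ) * (τ n) ^ 2 * ((i : ℝ) + 1) ^ (-1 - 2 * α) *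
              (c₁ ^ 2 * ((i : ℝ) + 1) ^ (-(2 * p))) := by
          rw [hrdef]
          rw [show ((i : ℝ) + 1) ^ (-(1 + 2 * α + 2 * p)) =
              ((i : ℝ) + 1) ^ ((-1 - 2 * α) + -(2 * p)) by ring_nf,
            Real.rpow_add (hx0 i)]
          ring
        rw [expand]
        have hnn : (0:ℝ) ≤ (n : ℝ) * (τ n) ^ 2 * ((i : ℝ) + 1) ^ (-1 - 2 * α) := by
          have := (hx0 i).le; positivity
        calc (n : ℝ) * (τ n) ^ 2 * ((i : ℝ) + 1) ^ (-1 - 2 * α) *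
              (c₁ ^ 2 * ((i : ℝ) + 1) ^ (-(2 * p)))
            ≤ (n : ℝ) * (τ n) ^ 2 * ((i : ℝ) + 1) ^ (-1 - 2 * α) * (κ i) ^ 2 :=
              mul_le_mul_of_nonneg_left hκ1 hnn
          _ = (n : ℝ) * ((τ n) ^ 2 * ((i : ℝ) + 1) ^ (-1 - 2 * α)) * (κ i) ^ 2 := by ring
      linarith [key]
    have db := denom_bound hK0 (hx1 i) ht0 ht1 hrt (hD1 n i) hDv2
    have split : ((i : ℝ) + 1) ^ (-2 * β) = ((i : ℝ) + 1) ^ (2 * q) * ((i : ℝ) + 1) ^ (-(2 * s)) := by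
      rw [← Real.rpow_add (hx0 i)]
      rw [hsdef, show 2 * q + -(2 * (β + q)) = -2 * β by ring]
    calc (l i) ^ 2 * ((i : ℝ) + 1) ^ (-2 * β) / (1 + (n : ℝ) * lam n i * (κ i) ^ 2) ^ 2
        = (l i) ^ 2 * ((i : ℝ) + 1) ^ (2 * q) *
            (((i : ℝ) + 1) ^ (-(2 * s)) / (1 + (n : ℝ) * lam n i * (κ i) ^ 2) ^ 2) := by
          rw [split]; ring
      _ ≤ (l i) ^ 2 * ((i : ℝ) + 1) ^ (2 * q) * ((c₁ ^ 2 * m) ^ (-(2 * t))) := by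
          gcongr
      _ = (c₁ ^ 2 * m) ^ (-(2 * t)) * ((l i) ^ 2 * ((i : ℝ) + 1) ^ (2 * q)) := by ring
  -- sum the pointwise bound
  have hsummLHS : Summable (fun i : ℕ => (l i) ^ 2 * ((i : ℝ) + 1) ^ (-2 * β) /
      (1 + (n : ℝ) * lam n i * (κ i) ^ 2) ^ 2) :=
    (summable_congr fun i => (e₃ n i)).mpr (hb2 n)
  have sumbound : (∑' i : ℕ, (l i) ^ 2 * ((i : ℝ) + 1) ^ (-2 * β) /
      (1 + (n : ℝ) * lam n i * (κ i) ^ 2) ^ 2) ≤ (c₁ ^ 2 * m) ^ (-(2 * t)) * B := by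
    rw [hBdef, ← tsum_mul_left]
    exact hsummLHS.tsum_le_tsum hpt (hl.mul_left _)
  -- combine
  have hX2 : (∑' i : ℕ, l i * μ₀ i / (1 + (n : ℝ) * lam n i * (κ i) ^ 2)) ^ 2 ≤
      A * ((c₁ ^ 2 * m) ^ (-(2 * t)) * B) :=
    (part1 n).trans (mul_le_mul_of_nonneg_left sumbound hA0)
  have habs : |∑' i : ℕ, l i * μ₀ i / (1 + (n : ℝ) * lam n i * (κ i) ^ 2)| ≤
      Real.sqrt (A * ((c₁ ^ 2 * m) ^ (-(2 * t)) * B)) := by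
    rw [← Real.sqrt_sq_eq_abs]
    exact Real.sqrt_le_sqrt hX2
  have sqrteq : Real.sqrt (A * ((c₁ ^ 2 * m) ^ (-(2 * t)) * B)) =
      Real.sqrt A * ((c₁ ^ 2) ^ (-t) * m ^ (-t)) * Real.sqrt B := by
    rw [Real.sqrt_mul hA0, Real.sqrt_mul (Real.rpow_nonneg hK0.le _)]
    have : Real.sqrt ((c₁ ^ 2 * m) ^ (-(2 * t))) = (c₁ ^ 2) ^ (-t) * m ^ (-t) := by
      rw [show (-(2 * t)) = 2 * (-t) by ring, ← rpow_sq hK0.le,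
        Real.sqrt_sq (Real.rpow_nonneg hK0.le _), Real.mul_rpow (by positivity) hm0.le]
    rw [this]; ring
  rw [sqrteq] at habs
  calc |∑' i : ℕ, l i * μ₀ i / (1 + (n : ℝ) * lam n i * (κ i) ^ 2)|
      ≤ Real.sqrt A * ((c₁ ^ 2) ^ (-t) * m ^ (-t)) * Real.sqrt B := habs
    _ = (c₁ ^ 2) ^ (-t) * Real.sqrt A * Real.sqrt B * m ^ (-t) := by ring
end
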